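/- arXiv:1805.10006 — 8 statements merged into one kernel-verified Lean document; each statement's English description precedes it below -/
import Mathlib

section
/- Let d ≥ 1, let 0 < ℓ ≤ 2R, and let e₁ denote the first standard basis vector of ℝ^d. Then the boost Λ_s maps the double cone D_{ℓ/2}((ℓ/2)·e₁) into the double cone D_R(R·e₁) if and only if |s| ≤ log(2R/ℓ). (In the paper's parametrization s = 2πt, this says the maximal modular flow time is exactly τ = (2π)^{-1} log(2R/ℓ).) -/
/-- The open double cone over the Euclidean ball of radius `r` centered at `c`
in the time-zero slice of `(1+d)`-dimensional Minkowski space. -/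
noncomputable def doubleCone (d : ℕ) (r : ℝ) (c : EuclideanSpace ℝ (Fin d)) :
    Set (ℝ × EuclideanSpace ℝ (Fin d)) :=
  {p | |p.1| + dist p.2 c < r}

/-- The boost `Λ_s` in the `(x⁰, x¹)`-plane. -/
noncomputable def boost (d : ℕ) [NeZero d] (s : ℝ) (p : ℝ × EuclideanSpace ℝ (Fin d)) :
    ℝ × EuclideanSpace ℝ (Fin d) :=
  (p.1 * Real.cosh s + p.2 0 * Real.sinh s,
    WithLp.toLp 2 (fun i => if i = 0 then p.1 * Real.sinh s + p.2 0 * Real.cosh s else p.2 i))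

private lemma sqrt_char (r t u Q : ℝ) (hQ : 0 ≤ Q) :
    |t| + Real.sqrt ((u - r) ^ 2 + Q) < r ↔
      0 < u - t ∧ 0 < u + t ∧ (u - t) * (u + t) + Q < 2 * r * (u - t) ∧
        (u - t) * (u + t) + Q < 2 * r * (u + t) := by
  constructor
  · intro h
    have hs := Real.sqrt_nonneg ((u - r) ^ 2 + Q)
    have ht : |t| < r := by linarith
    have h1 : Real.sqrt ((u - r) ^ 2 + Q) < r - |t| := by linarith
    have hsq : (u - r) ^ 2 + Q < (r - |t|) ^ 2 :=
      (Real.sqrt_lt' (by linarith)).1 h1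
    have hat := abs_nonneg t
    have h2 := le_abs_self t
    have h3 := neg_abs_le t
    have hu : |t| < u := by
      by_contra hc
      push_neg at hc
      nlinarith [mul_nonneg (sub_nonneg.2 hc) (by linarith : (0:ℝ) ≤ 2 * r - u - |t|)]
    have hr0 : (0:ℝ) ≤ r := by linarith
    refine ⟨by linarith, by linarith, ?_, ?_⟩ <;>
      nlinarith [mul_nonneg hr0 (sub_nonneg.2 h2), mul_nonneg hr0 (by linarith : (0:ℝ) ≤ |t| + t)]
  · rintro ⟨ha, hb, h1, h2⟩
    have hu : |t| < u := abs_lt.2 ⟨by linarith, by linarith⟩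
    have hat := abs_nonneg t
    have hA : u ^ 2 - t ^ 2 + Q < 2 * r * (u - |t|) := by
      rcases abs_cases t with ⟨h, h'⟩ | ⟨h, h'⟩ <;> rw [h] <;> nlinarith
    have hr0 : 0 < r := by
      nlinarith [sq_abs t, mul_pos (lt_of_le_of_lt hat hu) (lt_of_le_of_lt hat hu)]
    have hsq : (u - r) ^ 2 + Q < (r - |t|) ^ 2 := by nlinarith [sq_abs t]
    have hr : |t| < r := by
      by_contra hc
      push_neg at hc
      nlinarith [mul_pos (sub_pos.2 hu) (by linarith : (0:ℝ) < u + |t| - 2 * r)]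
    have := (Real.sqrt_lt' (y := r - |t|) (by linarith)).2 hsq
    linarith

private lemma dist_single (d : ℕ) [NeZero d] (r : ℝ) (x : EuclideanSpace ℝ (Fin d)) :
    dist x (r • EuclideanSpace.single (0 : Fin d) (1 : ℝ)) =
      Real.sqrt ((x 0 - r) ^ 2 + ∑ i ∈ Finset.univ.erase (0 : Fin d), (x i) ^ 2) := by
  rw [EuclideanSpace.dist_eq]
  congr 1
  rw [← Finset.add_sum_erase _ _ (Finset.mem_univ (0 : Fin d))]
  congr 1
  · simp [EuclideanSpace.single_apply, Real.dist_eq]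
  · refine Finset.sum_congr rfl fun i hi => ?_
    have : i ≠ 0 := Finset.ne_of_mem_erase hi
    simp [EuclideanSpace.single_apply, this, Real.dist_eq, sq_abs]

theorem boost_mapsTo_doubleCone_iff (d : ℕ) [NeZero d] (R ℓ : ℝ) (hℓ : 0 < ℓ)
    (hℓR : ℓ ≤ 2 * R) (s : ℝ) :
    Set.MapsTo (boost d s)
      (doubleCone d (ℓ / 2) ((ℓ / 2) • EuclideanSpace.single (0 : Fin d) (1 : ℝ)))
      (doubleCone d R (R • EuclideanSpace.single (0 : Fin d) (1 : ℝ)))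
      ↔ |s| ≤ Real.log (2 * R / ℓ) := by
  have hR : 0 < R := by linarith
  have hQnn : ∀ x : EuclideanSpace ℝ (Fin d),
      (0:ℝ) ≤ ∑ i ∈ Finset.univ.erase (0 : Fin d), (x i) ^ 2 :=
    fun x => Finset.sum_nonneg fun i _ => sq_nonneg _
  have hmem : ∀ (r : ℝ) (p : ℝ × EuclideanSpace ℝ (Fin d)),
      p ∈ doubleCone d r (r • EuclideanSpace.single (0 : Fin d) (1 : ℝ)) ↔
        (0 < p.2 0 - p.1 ∧ 0 < p.2 0 + p.1 ∧
          (p.2 0 - p.1) * (p.2 0 + p.1) + (∑ i ∈ Finset.univ.erase (0 : Fin d), (p.2 i) ^ 2)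
            < 2 * r * (p.2 0 - p.1) ∧
          (p.2 0 - p.1) * (p.2 0 + p.1) + (∑ i ∈ Finset.univ.erase (0 : Fin d), (p.2 i) ^ 2)
            < 2 * r * (p.2 0 + p.1)) := by
    intro r p
    show |p.1| + dist p.2 _ < r ↔ _
    rw [dist_single, sqrt_char _ _ _ _ (hQnn p.2)]
  have hA : ∀ p : ℝ × EuclideanSpace ℝ (Fin d),
      (boost d s p).2 0 - (boost d s p).1 = (p.2 0 - p.1) * Real.exp (-s) := by
    intro p
    show (if (0:Fin d) = 0 then p.1 * Real.sinh s + p.2 0 * Real.cosh s else p.2 0)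
        - (p.1 * Real.cosh s + p.2 0 * Real.sinh s) = _
    rw [if_pos rfl, ← Real.cosh_sub_sinh]; ring
  have hB : ∀ p : ℝ × EuclideanSpace ℝ (Fin d),
      (boost d s p).2 0 + (boost d s p).1 = (p.2 0 + p.1) * Real.exp s := by
    intro p
    show (if (0:Fin d) = 0 then p.1 * Real.sinh s + p.2 0 * Real.cosh s else p.2 0)
        + (p.1 * Real.cosh s + p.2 0 * Real.sinh s) = _
    rw [if_pos rfl, ← Real.cosh_add_sinh]; ring
  have hQeq : ∀ p : ℝ × EuclideanSpace ℝ (Fin d),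
      (∑ i ∈ Finset.univ.erase (0 : Fin d), ((boost d s p).2 i) ^ 2) =
        ∑ i ∈ Finset.univ.erase (0 : Fin d), (p.2 i) ^ 2 := by
    intro p
    refine Finset.sum_congr rfl fun i hi => ?_
    have hi0 : i ≠ 0 := Finset.ne_of_mem_erase hi
    simp [boost, hi0]
  have hses : Real.exp (-s) * Real.exp s = 1 := by
    rw [← Real.exp_add]; simp
  constructor
  · intro hmap
    have key : ∀ t : ℝ, 0 < t → t < ℓ → t < 2 * R * Real.exp (-|s|) := by
      intro t ht0 htℓ
      set p : ℝ × EuclideanSpace ℝ (Fin d) := ((0:ℝ), t • EuclideanSpace.single 0 1) with hpdef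
      have hx0 : p.2 0 = t := by simp [hpdef, EuclideanSpace.single_apply]
      have hQ0 : (∑ i ∈ Finset.univ.erase (0 : Fin d), (p.2 i) ^ 2) = 0 := by
        refine Finset.sum_eq_zero fun i hi => ?_
        have hi0 : i ≠ 0 := Finset.ne_of_mem_erase hi
        simp [hpdef, EuclideanSpace.single_apply, hi0]
      have hp1 : p.1 = 0 := rfl
      have hp : p ∈ doubleCone d (ℓ / 2) ((ℓ / 2) • EuclideanSpace.single (0 : Fin d) (1 : ℝ)) := by
        rw [hmem]
        rw [hx0, hQ0, hp1]
        refine ⟨by linarith, by linarith, by nlinarith, by nlinarith⟩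
      have himg := (hmem R (boost d s p)).1 (hmap hp)
      rw [hA p, hB p, hQeq p, hQ0, hx0, hp1] at himg
      obtain ⟨-, -, c3, c4⟩ := himg
      have hc3 : t * t < 2 * R * (t * Real.exp (-s)) := by
        have e1 : (t - 0) * Real.exp (-s) * ((t + 0) * Real.exp s) = t * t := by
          have : (t - 0) * Real.exp (-s) * ((t + 0) * Real.exp s)
              = t * t * (Real.exp (-s) * Real.exp s) := by ring
          rw [this, hses, mul_one]
        calc t * t = (t - 0) * Real.exp (-s) * ((t + 0) * Real.exp s) + 0 := by rw [e1]; ring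
          _ < 2 * R * ((t - 0) * Real.exp (-s)) := c3
          _ = 2 * R * (t * Real.exp (-s)) := by ring
      have hc4 : t * t < 2 * R * (t * Real.exp s) := by
        have e1 : (t - 0) * Real.exp (-s) * ((t + 0) * Real.exp s) = t * t := by
          have : (t - 0) * Real.exp (-s) * ((t + 0) * Real.exp s)
              = t * t * (Real.exp (-s) * Real.exp s) := by ring
          rw [this, hses, mul_one]
        calc t * t = (t - 0) * Real.exp (-s) * ((t + 0) * Real.exp s) + 0 := by rw [e1]; ring
          _ < 2 * R * ((t + 0) * Real.exp s) := c4
          _ = 2 * R * (t * Real.exp s) := by ring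
      rcases abs_cases s with ⟨h, -⟩ | ⟨h, -⟩
      · rw [h]; nlinarith
      · rw [h, neg_neg]; nlinarith
    have hle : ℓ ≤ 2 * R * Real.exp (-|s|) := by
      by_contra hc
      push_neg at hc
      have he : 0 < 2 * R * Real.exp (-|s|) := by positivity
      have := key ((2 * R * Real.exp (-|s|) + ℓ) / 2) (by linarith) (by linarith)
      linarith
    rw [Real.le_log_iff_exp_le (by positivity)]
    rw [le_div_iff₀ hℓ]
    have := mul_le_mul_of_nonneg_right hle (Real.exp_pos |s|).le
    calc Real.exp |s| * ℓ = 2 * R * Real.exp (-|s|) * Real.exp |s|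
          - (2 * R * Real.exp (-|s|) - ℓ) * Real.exp |s| := by ring
      _ ≤ 2 * R * Real.exp (-|s|) * Real.exp |s| := by nlinarith [Real.exp_pos |s|]
      _ = 2 * R := by rw [mul_assoc, ← Real.exp_add]; simp
  · intro hs
    have hE : ℓ * Real.exp |s| ≤ 2 * R := by
      rw [Real.le_log_iff_exp_le (by positivity), le_div_iff₀ hℓ] at hs
      linarith [hs]
    have main : ∀ (σ a c : ℝ), Real.exp (-|s|) ≤ Real.exp σ → 0 < a → c < ℓ * a →
        c < 2 * R * (a * Real.exp σ) := by
      intro σ a c hσ ha hc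
      have h1 : ℓ * a = ℓ * Real.exp |s| * (a * Real.exp (-|s|)) := by
        rw [mul_mul_mul_comm, ← Real.exp_add]; simp
      have h2 : ℓ * Real.exp |s| * (a * Real.exp (-|s|)) ≤ 2 * R * (a * Real.exp σ) := by
        apply mul_le_mul hE (mul_le_mul_of_nonneg_left hσ ha.le) (by positivity) (by linarith)
      rw [h1] at hc
      linarith
    intro p hp
    obtain ⟨ha, hb, h1, h2⟩ := (hmem (ℓ / 2) p).1 hp
    have hprod : (p.2 0 - p.1) * Real.exp (-s) * ((p.2 0 + p.1) * Real.exp s)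
        = (p.2 0 - p.1) * (p.2 0 + p.1) := by
      have : (p.2 0 - p.1) * Real.exp (-s) * ((p.2 0 + p.1) * Real.exp s)
          = (p.2 0 - p.1) * (p.2 0 + p.1) * (Real.exp (-s) * Real.exp s) := by ring
      rw [this, hses, mul_one]
    rw [hmem, hA p, hB p, hQeq p]
    refine ⟨mul_pos ha (Real.exp_pos _), mul_pos hb (Real.exp_pos _), ?_, ?_⟩
    · refine main (-s) _ _ (Real.exp_le_exp.2 (neg_le_neg (le_abs_self s))) ha ?_
      rw [hprod]; linarith
    · refine main s _ _ (Real.exp_le_exp.2 (neg_abs_le s)) hb ?_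
      rw [hprod]; linarith
end

section
/- Let ρ : ℕ → ℝ be a sequence with ρ_n > 0 for all n and ∑_{n} ρ_n < ∞. Then for every z ∈ ℂ the family (sinc(ρ_n z))_{n} is multipliable, and the function P : ℂ → ℂ defined by P(z) = ∏'_{n} sinc(ρ_n z) is analytic (complex differentiable) on all of ℂ, with P(0) = 1; moreover the convergence of the partial products to P is uniform on every compact subset of ℂ. -/
open Filter

/-- `sinc z = sin z / z` for `z ≠ 0`, with `sinc 0 = 1`. -/
noncomputable def csinc (z : ℂ) : ℂ := if z = 0 then 1 else Complex.sin z / z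

open Complex in
lemma norm_sin_sub_self_le {w : ℂ} (hw : ‖w‖ ≤ 1) : ‖Complex.sin w - w‖ ≤ ‖w‖ ^ 2 := by
  set a := Complex.exp (w * I) - 1 - w * I with ha_def
  set b := Complex.exp (-w * I) - 1 - (-w * I) with hb_def
  have ha : ‖a‖ ≤ ‖w‖ ^ 2 := by
    have := Complex.norm_exp_sub_one_sub_id_le (x := w * I) (by simpa using hw)
    simpa [ha_def, Complex.norm_def] using this
  have hb : ‖b‖ ≤ ‖w‖ ^ 2 := by
    have := Complex.norm_exp_sub_one_sub_id_le (x := -w * I) (by simpa using hw)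
    simpa [hb_def, Complex.norm_def] using this
  have key : Complex.sin w - w = (b - a) * I / 2 := by
    rw [Complex.sin, ha_def, hb_def]
    linear_combination (-w) * Complex.I_sq
  calc ‖Complex.sin w - w‖ = ‖b - a‖ / 2 := by
        rw [key]; simp [norm_div, norm_mul]
    _ ≤ (‖b‖ + ‖a‖) / 2 := by gcongr; exact norm_sub_le _ _
    _ ≤ ‖w‖ ^ 2 := by linarith

lemma norm_csinc_sub_one_le {w : ℂ} (hw : ‖w‖ ≤ 1) : ‖csinc w - 1‖ ≤ ‖w‖ := by
  rcases eq_or_ne w 0 with rfl | h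
  · simp [csinc]
  · rw [csinc, if_neg h]
    have h2 : Complex.sin w / w - 1 = (Complex.sin w - w) / w := by field_simp
    rw [h2, norm_div, div_le_iff₀ (norm_pos_iff.mpr h)]
    calc ‖Complex.sin w - w‖ ≤ ‖w‖ ^ 2 := norm_sin_sub_self_le hw
      _ = ‖w‖ * ‖w‖ := sq ‖w‖

lemma continuous_csinc : Continuous csinc := by
  rw [continuous_iff_continuousAt]
  intro x
  rcases eq_or_ne x 0 with rfl | h
  · rw [ContinuousAt]
    have h0 : csinc 0 = 1 := by simp [csinc]
    rw [h0]
    have h1 : Filter.Tendsto (fun w : ℂ => csinc w - 1) (nhds 0) (nhds 0) := by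
      apply squeeze_zero_norm' _ (tendsto_norm_zero)
      filter_upwards [Metric.ball_mem_nhds (0:ℂ) one_pos] with w hw
      exact norm_csinc_sub_one_le (le_of_lt (by simpa using hw))
    have := h1.add (tendsto_const_nhds (x := (1:ℂ)))
    simpa using this
  · have he : (fun w : ℂ => Complex.sin w / w) =ᶠ[nhds x] csinc := by
      filter_upwards [isOpen_ne.mem_nhds (h : x ≠ 0)] with w hw
      simp [csinc, hw]
    exact (ContinuousAt.div (Complex.continuous_sin.continuousAt) continuousAt_id h).congr he

lemma differentiable_csinc : Differentiable ℂ csinc := by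
  rw [← differentiableOn_univ,
    ← Complex.differentiableOn_compl_singleton_and_continuousAt_iff (c := 0) Filter.univ_mem]
  constructor
  · intro x hx
    have hx0 : x ≠ 0 := hx.2
    have he : (fun w : ℂ => Complex.sin w / w) =ᶠ[nhds x] csinc := by
      filter_upwards [isOpen_ne.mem_nhds (hx0 : x ≠ 0)] with w hw
      simp [csinc, hw]
    exact ((Complex.differentiable_sin.differentiableAt.div differentiableAt_id
      hx0).congr_of_eventuallyEq he.symm).differentiableWithinAt
  · exact continuous_csinc.continuousAt

lemma prod_one_add_sub_one_norm_le (s : Finset ℕ) (g : ℕ → ℂ) :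
    ‖∏ i ∈ s, (1 + g i) - 1‖ ≤ ∏ i ∈ s, (1 + ‖g i‖) - 1 := by
  induction s using Finset.induction_on with
  | empty => simp
  | @insert a s ha ih =>
    rw [Finset.prod_insert ha, Finset.prod_insert ha]
    have h1 : (1 + g a) * ∏ i ∈ s, (1 + g i) - 1
        = (1 + g a) * (∏ i ∈ s, (1 + g i) - 1) + g a := by ring
    rw [h1]
    have hga : ‖(1:ℂ) + g a‖ ≤ 1 + ‖g a‖ := by simpa using norm_add_le (1:ℂ) (g a)
    have hm := mul_le_mul hga ih (norm_nonneg _) (by linarith [norm_nonneg (g a)])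
    calc ‖(1 + g a) * (∏ i ∈ s, (1 + g i) - 1) + g a‖
        ≤ ‖(1:ℂ) + g a‖ * ‖∏ i ∈ s, (1 + g i) - 1‖ + ‖g a‖ := by
          refine (norm_add_le _ _).trans ?_; rw [norm_mul]
      _ ≤ (1 + ‖g a‖) * (∏ i ∈ s, (1 + ‖g i‖) - 1) + ‖g a‖ := by linarith
      _ = (1 + ‖g a‖) * ∏ i ∈ s, (1 + ‖g i‖) - 1 := by ring

lemma prod_one_add_le_exp (s : Finset ℕ) (g : ℕ → ℝ) (hg : ∀ i, 0 ≤ g i) :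
    ∏ i ∈ s, (1 + g i) ≤ Real.exp (∑ i ∈ s, g i) := by
  rw [Real.exp_sum]
  exact Finset.prod_le_prod (fun i _ => by linarith [hg i]) (fun i _ => by
    have := Real.add_one_le_exp (g i); linarith)

lemma norm_rho_mul_z {ρ : ℕ → ℝ} (hpos : ∀ n, 0 < ρ n) (n : ℕ) (z : ℂ) :
    ‖(ρ n : ℂ) * z‖ = ρ n * ‖z‖ := by
  rw [norm_mul, Complex.norm_real, Real.norm_eq_abs, abs_of_pos (hpos n)]

lemma multipliable_csinc (ρ : ℕ → ℝ) (hpos : ∀ n, 0 < ρ n) (hsum : Summable ρ) (z : ℂ) :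
    Multipliable fun n : ℕ => csinc ((ρ n : ℂ) * z) := by
  by_cases h : ∀ n, csinc ((ρ n : ℂ) * z) ≠ 0
  · have hlog : Summable fun n => Complex.log (csinc ((ρ n : ℂ) * z)) := by
      have hmaj : Summable fun n => 3/2 * (ρ n * ‖z‖) := (hsum.mul_right ‖z‖).mul_left (3/2)
      apply hmaj.of_norm_bounded_eventually_nat
      have ht : Filter.Tendsto (fun n => ρ n * ‖z‖) atTop (nhds 0) := by
        simpa using hsum.tendsto_atTop_zero.mul_const ‖z‖
      filter_upwards [ht.eventually_le_const (by norm_num : (0:ℝ) < 1/2)] with n hn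
      have hw : ‖(ρ n : ℂ) * z‖ ≤ 1/2 := by rw [norm_rho_mul_z hpos]; exact hn
      have hu : ‖csinc ((ρ n : ℂ) * z) - 1‖ ≤ 1/2 :=
        le_trans (norm_csinc_sub_one_le (hw.trans (by norm_num))) hw
      have hrw : csinc ((ρ n : ℂ) * z) = 1 + (csinc ((ρ n : ℂ) * z) - 1) := by ring
      rw [hrw]
      calc ‖Complex.log (1 + (csinc ((ρ n : ℂ) * z) - 1))‖
          ≤ 3/2 * ‖csinc ((ρ n : ℂ) * z) - 1‖ := Complex.norm_log_one_add_half_le_self hu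
        _ ≤ 3/2 * (ρ n * ‖z‖) := by
            have h2 := norm_csinc_sub_one_le (hw.trans (by norm_num : (1:ℝ)/2 ≤ 1))
            rw [norm_rho_mul_z hpos] at h2
            linarith
    exact Complex.multipliable_of_summable_log hlog
  · push_neg at h
    obtain ⟨n₀, hn₀⟩ := h
    refine ⟨0, ?_⟩
    rw [HasProd]
    refine tendsto_const_nhds.congr' ?_
    filter_upwards [Filter.eventually_ge_atTop ({n₀} : Finset ℕ)] with s hs
    exact (Finset.prod_eq_zero (hs (Finset.mem_singleton_self n₀)) hn₀).symm

lemma uniformCauchy_prod_csinc (ρ : ℕ → ℝ) (hpos : ∀ n, 0 < ρ n) (hsum : Summable ρ)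
    {K : Set ℂ} (hK : IsCompact K) :
    UniformCauchySeqOn (fun (N : ℕ) (z : ℂ) => ∏ n ∈ Finset.range N, csinc ((ρ n : ℂ) * z))
      atTop K := by
  obtain ⟨r, hr⟩ := hK.isBounded.subset_closedBall 0
  set R : ℝ := max r 0 + 1 with hR_def
  have hR0 : 0 < R := by positivity
  have hzR : ∀ z ∈ K, ‖z‖ ≤ R := by
    intro z hz
    have h1 : ‖z‖ ≤ r := by simpa using hr hz
    have : r ≤ R := le_trans (le_max_left r 0) (by linarith)
    linarith
  -- tail index
  obtain ⟨N₀, hN₀⟩ := Filter.eventually_atTop.mp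
    (hsum.tendsto_atTop_zero.eventually_le_const (by positivity : (0:ℝ) < 1/R))
  have hkey : ∀ n, N₀ ≤ n → ∀ z ∈ K, ‖csinc ((ρ n : ℂ) * z) - 1‖ ≤ ρ n * R := by
    intro n hn z hz
    have hw : ‖(ρ n : ℂ) * z‖ ≤ ρ n * R := by
      rw [norm_rho_mul_z hpos]
      exact mul_le_mul_of_nonneg_left (hzR z hz) (hpos n).le
    have hw1 : ‖(ρ n : ℂ) * z‖ ≤ 1 := by
      refine hw.trans ?_
      calc ρ n * R ≤ (1/R) * R := mul_le_mul_of_nonneg_right (hN₀ n hn) hR0.le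
        _ = 1 := by field_simp
    exact le_trans (norm_csinc_sub_one_le hw1) hw
  -- bound on the "head" product
  obtain ⟨c, hc⟩ := hK.exists_bound_of_continuousOn (f := fun z : ℂ =>
    ∏ n ∈ Finset.range N₀, csinc ((ρ n : ℂ) * z))
    (Continuous.continuousOn (by
      apply continuous_finset_prod
      intro i _
      exact continuous_csinc.comp (continuous_const.mul continuous_id)))
  set C : ℝ := max c 0 with hC_def
  have hC0 : 0 ≤ C := le_max_right c 0
  set S : ℝ := ∑' n, ρ n with hS_def
  have hsum_le : ∀ s : Finset ℕ, ∑ i ∈ s, ρ i ≤ S :=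
    fun s => Summable.sum_le_tsum s (fun i _ => (hpos i).le) hsum
  set B : ℝ := C * Real.exp (R * S) with hB_def
  have hB0 : 0 ≤ B := mul_nonneg hC0 (Real.exp_pos _).le
  -- bound on all partial products
  have bound1 : ∀ N, N₀ ≤ N → ∀ z ∈ K, ‖∏ n ∈ Finset.range N, csinc ((ρ n : ℂ) * z)‖ ≤ B := by
    intro N hN z hz
    rw [← Finset.prod_range_mul_prod_Ico _ hN, norm_mul]
    have h1 : ‖∏ n ∈ Finset.range N₀, csinc ((ρ n : ℂ) * z)‖ ≤ C :=
      le_trans (hc z hz) (le_max_left c 0)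
    have h2 : ‖∏ n ∈ Finset.Ico N₀ N, csinc ((ρ n : ℂ) * z)‖ ≤ Real.exp (R * S) := by
      rw [norm_prod]
      calc ∏ n ∈ Finset.Ico N₀ N, ‖csinc ((ρ n : ℂ) * z)‖
          ≤ ∏ n ∈ Finset.Ico N₀ N, (1 + ρ n * R) := by
            apply Finset.prod_le_prod (fun i _ => norm_nonneg _)
            intro i hi
            have hi' : N₀ ≤ i := (Finset.mem_Ico.mp hi).1
            have := hkey i hi' z hz
            calc ‖csinc ((ρ i : ℂ) * z)‖
                ≤ ‖csinc ((ρ i : ℂ) * z) - 1‖ + 1 := by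
                  simpa using norm_add_le (csinc ((ρ i : ℂ) * z) - 1) 1
              _ ≤ 1 + ρ i * R := by linarith
        _ ≤ Real.exp (∑ n ∈ Finset.Ico N₀ N, ρ n * R) :=
            prod_one_add_le_exp _ _ (fun i => mul_nonneg (hpos i).le hR0.le)
        _ ≤ Real.exp (R * S) := by
            apply Real.exp_le_exp.mpr
            rw [← Finset.sum_mul]
            calc (∑ n ∈ Finset.Ico N₀ N, ρ n) * R ≤ S * R :=
                mul_le_mul_of_nonneg_right (hsum_le _) hR0.le
              _ = R * S := mul_comm _ _
    calc ‖∏ n ∈ Finset.range N₀, csinc ((ρ n : ℂ) * z)‖ *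
          ‖∏ n ∈ Finset.Ico N₀ N, csinc ((ρ n : ℂ) * z)‖
        ≤ C * Real.exp (R * S) := mul_le_mul h1 h2 (norm_nonneg _) hC0
      _ = B := hB_def.symm
  -- difference bound
  have bound2 : ∀ N M, N₀ ≤ N → N ≤ M → ∀ z ∈ K,
      ‖(∏ n ∈ Finset.range M, csinc ((ρ n : ℂ) * z)) -
        ∏ n ∈ Finset.range N, csinc ((ρ n : ℂ) * z)‖
      ≤ B * (Real.exp (R * ∑ n ∈ Finset.Ico N M, ρ n) - 1) := by
    intro N M hN hNM z hz
    rw [← Finset.prod_range_mul_prod_Ico _ hNM]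
    have hfact : (∏ n ∈ Finset.range N, csinc ((ρ n : ℂ) * z)) *
          (∏ n ∈ Finset.Ico N M, csinc ((ρ n : ℂ) * z)) -
          ∏ n ∈ Finset.range N, csinc ((ρ n : ℂ) * z)
        = (∏ n ∈ Finset.range N, csinc ((ρ n : ℂ) * z)) *
          ((∏ n ∈ Finset.Ico N M, csinc ((ρ n : ℂ) * z)) - 1) := by ring
    rw [hfact, norm_mul]
    have htail : ‖(∏ n ∈ Finset.Ico N M, csinc ((ρ n : ℂ) * z)) - 1‖
        ≤ Real.exp (R * ∑ n ∈ Finset.Ico N M, ρ n) - 1 := by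
      have hrw : (∏ n ∈ Finset.Ico N M, csinc ((ρ n : ℂ) * z))
          = ∏ n ∈ Finset.Ico N M, (1 + (csinc ((ρ n : ℂ) * z) - 1)) :=
        Finset.prod_congr rfl (fun n _ => by ring)
      rw [hrw]
      refine le_trans (prod_one_add_sub_one_norm_le _ _) ?_
      have h1 : ∏ n ∈ Finset.Ico N M, (1 + ‖csinc ((ρ n : ℂ) * z) - 1‖)
          ≤ ∏ n ∈ Finset.Ico N M, (1 + ρ n * R) := by
        apply Finset.prod_le_prod (fun i _ => by positivity)
        intro i hi
        have := hkey i (le_trans hN (Finset.mem_Ico.mp hi).1) z hz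
        linarith
      have h2 : ∏ n ∈ Finset.Ico N M, (1 + ρ n * R)
          ≤ Real.exp (R * ∑ n ∈ Finset.Ico N M, ρ n) := by
        have heq : ∑ n ∈ Finset.Ico N M, ρ n * R = R * ∑ n ∈ Finset.Ico N M, ρ n := by
          rw [← Finset.sum_mul, mul_comm]
        have := prod_one_add_le_exp (Finset.Ico N M) (fun n => ρ n * R)
          (fun i => mul_nonneg (hpos i).le hR0.le)
        rwa [heq] at this
      linarith
    exact mul_le_mul (bound1 N hN z hz) htail (norm_nonneg _) hB0
  -- conclude
  rw [Metric.uniformCauchySeqOn_iff]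
  intro ε hε
  set δ : ℝ := Real.log (1 + ε / (B + 1)) / R with hδ_def
  have hδ0 : 0 < δ := by
    apply div_pos _ hR0
    apply Real.log_pos
    have : 0 < ε / (B + 1) := div_pos hε (by linarith)
    linarith
  obtain ⟨N₁, hN₁⟩ := Metric.cauchySeq_iff.mp (hsum.hasSum.tendsto_sum_nat.cauchySeq) δ hδ0
  refine ⟨max N₀ N₁, ?_⟩
  have main : ∀ m n, max N₀ N₁ ≤ n → n ≤ m → ∀ z ∈ K,
      dist (∏ k ∈ Finset.range m, csinc ((ρ k : ℂ) * z))
        (∏ k ∈ Finset.range n, csinc ((ρ k : ℂ) * z)) < ε := by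
    intro m n hn hnm z hz
    have hN₀n : N₀ ≤ n := le_trans (le_max_left _ _) hn
    have ht : ∑ k ∈ Finset.Ico n m, ρ k < δ := by
      have hd := hN₁ m (le_trans (le_trans (le_max_right _ _) hn) hnm) n
        (le_trans (le_max_right _ _) hn)
      rw [Real.dist_eq] at hd
      have heq : ∑ k ∈ Finset.Ico n m, ρ k
          = (∑ k ∈ Finset.range m, ρ k) - ∑ k ∈ Finset.range n, ρ k :=
        Finset.sum_Ico_eq_sub _ hnm
      rw [heq]
      exact lt_of_le_of_lt (le_abs_self _) hd
    rw [dist_eq_norm]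
    refine lt_of_le_of_lt (bound2 n m hN₀n hnm z hz) ?_
    have hexp : Real.exp (R * ∑ k ∈ Finset.Ico n m, ρ k) ≤ Real.exp (R * δ) := by
      apply Real.exp_le_exp.mpr
      exact mul_le_mul_of_nonneg_left ht.le hR0.le
    have hRδ : Real.exp (R * δ) = 1 + ε / (B + 1) := by
      rw [hδ_def, mul_div_cancel₀ _ (ne_of_gt hR0)]
      apply Real.exp_log
      have : 0 < ε / (B + 1) := div_pos hε (by linarith)
      linarith
    have hlt : B * (ε / (B + 1)) < ε := by
      rw [mul_div_assoc']
      rw [div_lt_iff₀ (by linarith : (0:ℝ) < B + 1)]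
      nlinarith
    calc B * (Real.exp (R * ∑ k ∈ Finset.Ico n m, ρ k) - 1)
        ≤ B * (ε / (B + 1)) := by
          apply mul_le_mul_of_nonneg_left _ hB0
          rw [hRδ] at hexp
          linarith
      _ < ε := hlt
  intro m hm n hn z hz
  rcases le_total n m with h | h
  · exact main m n hn h z hz
  · rw [dist_comm]
    exact main n m hm h z hz

theorem analytic_tprod_sinc (ρ : ℕ → ℝ) (hpos : ∀ n, 0 < ρ n) (hsum : Summable ρ) :
    (∀ z : ℂ, Multipliable fun n : ℕ => csinc ((ρ n : ℂ) * z)) ∧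
    Differentiable ℂ (fun z : ℂ => ∏' n : ℕ, csinc ((ρ n : ℂ) * z)) ∧
    (∏' n : ℕ, csinc ((ρ n : ℂ) * (0 : ℂ))) = 1 ∧
    ∀ K : Set ℂ, IsCompact K →
      TendstoUniformlyOn
        (fun (N : ℕ) (z : ℂ) => ∏ n ∈ Finset.range N, csinc ((ρ n : ℂ) * z))
        (fun z : ℂ => ∏' n : ℕ, csinc ((ρ n : ℂ) * z)) atTop K := by
  have hmult := multipliable_csinc ρ hpos hsum
  have hunif : ∀ K : Set ℂ, IsCompact K →
      TendstoUniformlyOn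
        (fun (N : ℕ) (z : ℂ) => ∏ n ∈ Finset.range N, csinc ((ρ n : ℂ) * z))
        (fun z : ℂ => ∏' n : ℕ, csinc ((ρ n : ℂ) * z)) atTop K := by
    intro K hK
    exact (uniformCauchy_prod_csinc ρ hpos hsum hK).tendstoUniformlyOn_of_tendsto
      (fun z _ => (hmult z).hasProd.tendsto_prod_nat)
  refine ⟨hmult, ?_, ?_, hunif⟩
  · have hlu : TendstoLocallyUniformly
        (fun (N : ℕ) (z : ℂ) => ∏ n ∈ Finset.range N, csinc ((ρ n : ℂ) * z))
        (fun z : ℂ => ∏' n : ℕ, csinc ((ρ n : ℂ) * z)) atTop :=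
      tendstoLocallyUniformly_iff_forall_isCompact.mpr hunif
    have hd : DifferentiableOn ℂ (fun z : ℂ => ∏' n : ℕ, csinc ((ρ n : ℂ) * z)) Set.univ := by
      apply ((tendstoLocallyUniformlyOn_univ).mpr hlu).differentiableOn _ isOpen_univ
      filter_upwards with N
      apply Differentiable.differentiableOn
      apply Differentiable.fun_finsetProd
      intro i _
      exact differentiable_csinc.comp ((differentiable_const _).mul differentiable_id)
    exact differentiableOn_univ.mp hd
  · have : (fun n : ℕ => csinc ((ρ n : ℂ) * (0:ℂ))) = fun _ : ℕ => (1:ℂ) := by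
      funext n
      simp [csinc]
    rw [this, tprod_one]
end

section
/- Let ρ : ℕ → ℝ be a sequence with ρ_n > 0 for all n and ∑_{n} ρ_n = s < ∞. Then there exists a probability measure μ on ℝ with μ([−s, s]) = 1 such that for every k ∈ ℝ: ∫_ℝ e^{ikt} dμ(t) = ∏'_{n} sinc(ρ_n k). (The infinite product of sinc functions is the characteristic function of an infinite convolution of uniform distributions, whose support grows by ρ_n at each step.) -/
open MeasureTheory Finset Filter Topology

namespace SincAux

/-! ### Generalities -/

lemma hasProd_zero {f : ℕ → ℂ} {m : ℕ} (h : f m = 0) : HasProd f 0 := by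
  have h2 : ∀ᶠ s : Finset ℕ in atTop, ∏ i ∈ s, f i = 0 := by
    filter_upwards [eventually_ge_atTop {m}] with s hs
    exact Finset.prod_eq_zero (hs (Finset.mem_singleton_self m)) h
  exact Tendsto.congr' (EventuallyEq.symm h2) tendsto_const_nhds

lemma abs_cos_sub_one_le (y : ℝ) : |Real.cos y - 1| ≤ y^2/2 := by
  rw [abs_le]
  constructor
  · nlinarith [Real.one_sub_sq_div_two_le_cos (x := y)]
  · nlinarith [Real.cos_le_one y, sq_nonneg y]

lemma multipliable_cos {b : ℕ → ℝ} (hb : Summable b) :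
    Multipliable (fun m => ((Real.cos (b m) : ℝ) : ℂ)) := by
  by_cases hz : ∃ m, Real.cos (b m) = 0
  · obtain ⟨m, hm⟩ := hz
    exact ⟨0, hasProd_zero (by exact_mod_cast congrArg (Complex.ofReal ·) hm)⟩
  · push_neg at hz
    have hlog : Summable (fun m => Complex.log ((Real.cos (b m) : ℝ) : ℂ)) := by
      apply Summable.of_norm_bounded_eventually (g := fun m => (3/4) * |b m|)
        (by simpa using (hb.abs.mul_left (3/4)))
      rw [Nat.cofinite_eq_atTop]
      have h0 : Tendsto b atTop (nhds 0) := hb.tendsto_atTop_zero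
      filter_upwards [(abs_zero (α := ℝ) ▸ h0.abs).eventually_le_const
        (by norm_num : (0:ℝ) < 1)] with m hm
      have hc : |Real.cos (b m) - 1| ≤ |b m| / 2 := by
        refine le_trans (abs_cos_sub_one_le _) ?_
        have : b m ^ 2 ≤ |b m| := by
          have h2 : b m ^ 2 = |b m|^2 := (sq_abs _).symm
          nlinarith [abs_nonneg (b m)]
        linarith
      have hrw : ((Real.cos (b m) : ℝ) : ℂ) = 1 + ((Real.cos (b m) - 1 : ℝ) : ℂ) := by
        push_cast; ring
      rw [hrw]
      have hnorm : ‖((Real.cos (b m) - 1 : ℝ) : ℂ)‖ ≤ 1/2 := by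
        rw [Complex.norm_real]
        simp only [Real.norm_eq_abs]
        linarith [hc, hm]
      calc ‖Complex.log (1 + ((Real.cos (b m) - 1 : ℝ) : ℂ))‖
          ≤ (3/2) * ‖((Real.cos (b m) - 1 : ℝ) : ℂ)‖ :=
            Complex.norm_log_one_add_half_le_self hnorm
        _ ≤ (3/4) * |b m| := by
            rw [Complex.norm_real, Real.norm_eq_abs]; linarith
    exact Complex.multipliable_of_summable_log hlog

/-! ### Viète's formula -/

lemma csinc_ofReal (x : ℝ) : csinc (x : ℂ) = ((if x = 0 then 1 else Real.sin x / x : ℝ) : ℂ) := by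
  unfold csinc
  split_ifs with h1 h2 h2
  · simp
  · exact absurd (by exact_mod_cast h1) h2
  · exact absurd (by exact_mod_cast h2) h1
  · push_cast [Complex.ofReal_sin]; ring

lemma viete_partial (x : ℝ) (N : ℕ) :
    2^N * Real.sin (x / 2^N) * ∏ j ∈ range N, Real.cos (x / 2^(j+1)) = Real.sin x := by
  induction N with
  | zero => simp
  | succ N ih =>
    rw [prod_range_succ]
    have h : Real.sin (x/2^N) = 2 * Real.sin (x/2^(N+1)) * Real.cos (x/2^(N+1)) := by
      rw [← Real.sin_two_mul]
      congr 1
      field_simp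
      ring
    rw [← ih, h]
    ring

lemma tendsto_viete (x : ℝ) :
    Tendsto (fun N => ∏ j ∈ range N, Real.cos (x / 2^(j+1))) atTop
      (nhds (if x = 0 then 1 else Real.sin x / x)) := by
  by_cases hx : x = 0
  · simp [hx]
  · simp only [if_neg hx]
    have hy : Tendsto (fun N : ℕ => x/2^N) atTop (nhds 0) :=
      tendsto_const_nhds.div_atTop (tendsto_pow_atTop_atTop_of_one_lt one_lt_two)
    have hy' : Tendsto (fun N : ℕ => x/2^N) atTop (𝓝[≠] 0) := by
      apply tendsto_nhdsWithin_of_tendsto_nhds_of_eventually_within _ hy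
      filter_upwards with N
      simp only [Set.mem_compl_iff, Set.mem_singleton_iff]
      positivity
    have hslope : Tendsto (fun y : ℝ => Real.sin y / y) (𝓝[≠] (0:ℝ)) (nhds 1) := by
      have := (hasDerivAt_iff_tendsto_slope).1 (Real.hasDerivAt_sin 0)
      rw [Real.cos_zero] at this
      apply this.congr'
      filter_upwards [self_mem_nhdsWithin] with y hy
      simp [slope_def_field, div_eq_iff, hy]
    have hq : Tendsto (fun N : ℕ => Real.sin (x/2^N) / (x/2^N)) atTop (nhds 1) :=
      hslope.comp hy'
    have hne : ∀ᶠ N : ℕ in atTop, Real.sin (x/2^N) / (x/2^N) ≠ 0 :=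
      hq.eventually_ne one_ne_zero
    have hlim : Tendsto (fun N : ℕ => Real.sin x / (x * (Real.sin (x/2^N) / (x/2^N)))) atTop
        (nhds (Real.sin x / x)) := by
      have h := Tendsto.div (tendsto_const_nhds (x := Real.sin x))
        (tendsto_const_nhds.mul hq) (by simpa using hx)
      rw [mul_one] at h
      exact h
    apply hlim.congr'
    filter_upwards [hne] with N hN
    have hxN : x / 2^N ≠ 0 := by positivity
    have h2 : x * (Real.sin (x/2^N) / (x/2^N)) = 2^N * Real.sin (x/2^N) := by
      field_simp
    rw [h2, eq_comm, eq_div_iff]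
    · rw [mul_comm]; exact viete_partial x N
    · intro h0
      apply hN
      rcases mul_eq_zero.1 h0 with h | h
      · exact absurd h (by positivity)
      · simp [h]

lemma summable_halves (x : ℝ) : Summable (fun j : ℕ => x / 2^(j+1)) := by
  have h : (fun j : ℕ => x / 2^(j+1)) = fun j => (x/2) * (1/2)^j := by
    funext j
    rw [pow_succ, div_pow, one_pow]
    field_simp
  rw [h]
  exact summable_geometric_two.mul_left _

lemma viete (x : ℝ) : HasProd (fun j : ℕ => ((Real.cos (x / 2^(j+1)) : ℝ) : ℂ)) (csinc x) := by
  have hM : Multipliable (fun j : ℕ => ((Real.cos (x / 2^(j+1)) : ℝ) : ℂ)) :=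
    multipliable_cos (summable_halves x)
  have h1 := hM.hasProd.tendsto_prod_nat
  have h2 : Tendsto (fun N => ∏ j ∈ range N, ((Real.cos (x/2^(j+1)) : ℝ) : ℂ)) atTop
      (nhds (csinc x)) := by
    rw [csinc_ofReal]
    have h3 := (Complex.continuous_ofReal.tendsto _).comp (tendsto_viete x)
    apply h3.congr
    intro N
    simp [Complex.ofReal_prod]
  rw [← tendsto_nhds_unique h1 h2]
  exact hM.hasProd

/-! ### Dyadic digits -/

noncomputable def eps (m : ℕ) (x : ℝ) : ℝ := if Int.fract (2^m * x) < 1/2 then -1 else 1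

lemma eps_measurable (m : ℕ) : Measurable (eps m) := by
  apply Measurable.ite _ measurable_const measurable_const
  exact measurableSet_lt ((measurable_const_mul _).fract) measurable_const

lemma abs_eps (m : ℕ) (x : ℝ) : |eps m x| = 1 := by
  unfold eps; split <;> simp

lemma eps_succ (m : ℕ) (x : ℝ) : eps (m+1) x = eps m (Int.fract (2*x)) := by
  unfold eps
  have h1 : Int.fract ((2:ℝ)^m * Int.fract (2*x)) = Int.fract (2^(m+1)*x) := by
    have h2 : (2:ℝ)^m * Int.fract (2*x) = 2^(m+1)*x - ((2^m * ⌊2*x⌋ : ℤ) : ℝ) := by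
      rw [Int.fract]; push_cast; ring
    rw [h2, Int.fract_sub_intCast]
  rw [h1]

lemma norm_exp_I_mul_real (r : ℝ) : ‖Complex.exp (Complex.I * r)‖ = 1 := by
  rw [Complex.norm_exp]
  simp

lemma ae_ne_real (c : ℝ) : ∀ᵐ x : ℝ, x ≠ c := by
  rw [MeasureTheory.ae_iff]
  have h : {x : ℝ | ¬ x ≠ c} = {c} := by ext y; simp
  rw [h]
  exact measure_singleton c

lemma bdd_intervalIntegrable (φ : ℝ → ℂ) (hm : Measurable φ) (C : ℝ)
    (hb : ∀ y, ‖φ y‖ ≤ C) (a b : ℝ) : IntervalIntegrable φ volume a b := by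
  rw [intervalIntegrable_iff]
  have : IsFiniteMeasure (volume.restrict (Set.uIoc a b)) := by
    constructor
    rw [Measure.restrict_apply_univ]
    exact (measure_Ioc_lt_top)
  apply MeasureTheory.Integrable.mono' (integrable_const C) hm.aestronglyMeasurable
  filter_upwards with y using hb y

lemma step (ψ : ℝ → ℂ) (hm : Measurable ψ) (C : ℝ) (hb : ∀ y, ‖ψ y‖ ≤ C) (A B : ℂ) :
    ∫ x in (0:ℝ)..1, (if Int.fract x < 1/2 then A else B) * ψ (Int.fract (2*x)) =
      ((A+B)/2) * ∫ y in (0:ℝ)..1, ψ y := by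
  have hmeas : Measurable (fun x => (if Int.fract x < 1/2 then A else B) * ψ (Int.fract (2*x))) := by
    apply Measurable.mul
    · exact Measurable.ite (measurableSet_lt measurable_fract measurable_const)
        measurable_const measurable_const
    · exact hm.comp (measurable_const_mul 2).fract
  have hbd : ∀ x, ‖(if Int.fract x < 1/2 then A else B) * ψ (Int.fract (2*x))‖ ≤ (‖A‖ + ‖B‖) * C := by
    intro x
    rw [norm_mul]
    have h1 : ‖(if Int.fract x < 1/2 then A else B)‖ ≤ ‖A‖ + ‖B‖ := by
      split <;> [linarith [norm_nonneg B]; linarith [norm_nonneg A]]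
    have h2 : ‖ψ (Int.fract (2*x))‖ ≤ C := hb _
    exact mul_le_mul h1 h2 (norm_nonneg _) (by linarith [norm_nonneg A, norm_nonneg B])
  have hint := fun a b => bdd_intervalIntegrable _ hmeas _ hbd a b
  rw [← intervalIntegral.integral_add_adjacent_intervals (hint 0 (1/2)) (hint (1/2) 1)]
  have e1 : ∫ x in (0:ℝ)..(1/2), (if Int.fract x < 1/2 then A else B) * ψ (Int.fract (2*x)) =
      ∫ x in (0:ℝ)..(1/2), A * ψ (2*x) := by
    apply intervalIntegral.integral_congr_ae
    filter_upwards [ae_ne_real (1/2)] with x hx hmem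
    rw [Set.uIoc_of_le (by norm_num : (0:ℝ) ≤ 1/2)] at hmem
    obtain ⟨h0, h1⟩ := hmem
    have hlt : x < 1/2 := lt_of_le_of_ne h1 hx
    have hf : Int.fract x = x := Int.fract_eq_self.2 ⟨le_of_lt h0, by linarith⟩
    have hf2 : Int.fract (2*x) = 2*x := Int.fract_eq_self.2 ⟨by linarith, by linarith⟩
    rw [hf, hf2, if_pos hlt]
  have e2 : ∫ x in (1/2:ℝ)..1, (if Int.fract x < 1/2 then A else B) * ψ (Int.fract (2*x)) =
      ∫ x in (1/2:ℝ)..1, B * ψ (2*x + (-1)) := by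
    apply intervalIntegral.integral_congr_ae
    filter_upwards [ae_ne_real 1] with x hx hmem
    rw [Set.uIoc_of_le (by norm_num : (1/2:ℝ) ≤ 1)] at hmem
    obtain ⟨h0, h1⟩ := hmem
    have hlt : x < 1 := lt_of_le_of_ne h1 hx
    have hf : Int.fract x = x := Int.fract_eq_self.2 ⟨by linarith, hlt⟩
    have hf2 : Int.fract (2*x) = 2*x - 1 := by
      have h3 : Int.fract (2*x) = Int.fract (2*x - (1:ℤ)) := (Int.fract_sub_intCast _ _).symm
      rw [h3]
      push_cast
      exact Int.fract_eq_self.2 ⟨by linarith, by linarith⟩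
    rw [hf, hf2, if_neg (by push_neg; linarith)]
    ring_nf
  rw [e1, e2]
  rw [intervalIntegral.integral_const_mul, intervalIntegral.integral_const_mul]
  have c1 : ∫ x in (0:ℝ)..(1/2), ψ (2*x) = (2:ℝ)⁻¹ • ∫ y in (0:ℝ)..1, ψ y := by
    have := intervalIntegral.integral_comp_mul_left (a := (0:ℝ)) (b := 1/2) ψ (two_ne_zero)
    simpa using this
  have c2 : ∫ x in (1/2:ℝ)..1, ψ (2*x + (-1)) = (2:ℝ)⁻¹ • ∫ y in (0:ℝ)..1, ψ y := by
    have := intervalIntegral.integral_comp_mul_add (a := (1/2:ℝ)) (b := 1) ψ (two_ne_zero) (-1)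
    norm_num at this
    convert this using 2 <;> norm_num
  rw [c1, c2, Complex.real_smul]
  push_cast
  ring

lemma key : ∀ (N : ℕ) (a : ℕ → ℝ),
    (∫ x in (0:ℝ)..1, ∏ m ∈ range N, Complex.exp (Complex.I * (a m) * (eps m x))) =
      ∏ m ∈ range N, ((Real.cos (a m) : ℝ) : ℂ) := by
  intro N
  induction N with
  | zero => simp
  | succ N ih =>
    intro a
    set ψ : ℝ → ℂ := fun y => ∏ m ∈ range N, Complex.exp (Complex.I * (a (m+1)) * (eps m y)) with hψ
    have hpr : ∀ x : ℝ, ∏ m ∈ range (N+1), Complex.exp (Complex.I * a m * eps m x) =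
        (if Int.fract x < 1/2 then Complex.exp (Complex.I * (a 0) * (-1))
          else Complex.exp (Complex.I * (a 0) * 1)) * ψ (Int.fract (2*x)) := by
      intro x
      rw [Finset.prod_range_succ', mul_comm]
      congr 1
      · unfold eps
        norm_num
        split <;> (push_cast; ring_nf)
      · rw [hψ]
        apply Finset.prod_congr rfl
        intro m _
        rw [eps_succ]
    have hmψ : Measurable ψ := by
      apply Finset.measurable_prod
      intro m _
      exact Complex.measurable_exp.comp
        ((measurable_const.mul (Complex.measurable_ofReal.comp (eps_measurable m))))
    have hbψ : ∀ y, ‖ψ y‖ ≤ 1 := by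
      intro y
      rw [hψ]
      simp only
      rw [norm_prod]
      apply le_of_eq
      apply Finset.prod_eq_one
      intro m _
      have h4 : Complex.I * (a (m+1)) * (eps m y) = Complex.I * ((a (m+1) * eps m y : ℝ) : ℂ) := by
        push_cast; ring
      rw [h4]
      exact norm_exp_I_mul_real _
    calc (∫ x in (0:ℝ)..1, ∏ m ∈ range (N+1), Complex.exp (Complex.I * a m * eps m x))
        = ∫ x in (0:ℝ)..1, (if Int.fract x < 1/2 then Complex.exp (Complex.I * (a 0) * (-1))
            else Complex.exp (Complex.I * (a 0) * 1)) * ψ (Int.fract (2*x)) := by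
          apply intervalIntegral.integral_congr
          intro x _
          exact hpr x
      _ = ((Complex.exp (Complex.I * (a 0) * (-1)) + Complex.exp (Complex.I * (a 0) * 1))/2) *
            ∫ y in (0:ℝ)..1, ψ y := step ψ hmψ 1 hbψ _ _
      _ = ((Real.cos (a 0) : ℝ) : ℂ) * ∏ m ∈ range N, ((Real.cos (a (m+1)) : ℝ) : ℂ) := by
          rw [ih]
          congr 1
          rw [Complex.ofReal_cos, Complex.cos]
          ring_nf
      _ = ∏ m ∈ range (N+1), ((Real.cos (a m) : ℝ) : ℂ) := by
          rw [Finset.prod_range_succ', mul_comm]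


/-! ### The coefficient sequence and the random series -/

noncomputable def cseq (ρ : ℕ → ℝ) (m : ℕ) : ℝ :=
  ρ (Nat.pairEquiv.symm m).1 * (1/2)^((Nat.pairEquiv.symm m).2 + 1)

lemma hasSum_cseq {ρ : ℕ → ℝ} {s : ℝ} (hpos : ∀ n, 0 < ρ n) (hsum : HasSum ρ s) :
    HasSum (cseq ρ) s := by
  have hfiber : ∀ n, HasSum (fun j : ℕ => ρ n * (1/2:ℝ)^(j+1)) (ρ n) := by
    intro n
    have h := hasSum_geometric_two.mul_left (ρ n / 2)
    rw [show (ρ n / 2) * 2 = ρ n by ring] at h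
    have heq : (fun j : ℕ => ρ n * (1/2:ℝ)^(j+1)) = fun j => (ρ n / 2) * (1/2)^j := by
      funext j
      rw [pow_succ]
      ring
    rw [heq]
    exact h
  have hsumP : Summable (fun p : ℕ × ℕ => ρ p.1 * (1/2:ℝ)^(p.2+1)) := by
    apply (summable_prod_of_nonneg ?_).2
    · refine ⟨fun n => (hfiber n).summable, ?_⟩
      apply Summable.congr hsum.summable
      intro n
      exact ((hfiber n).tsum_eq).symm
    · intro p
      have := (hpos p.1).le
      positivity
  have hP : HasSum (fun p : ℕ × ℕ => ρ p.1 * (1/2:ℝ)^(p.2+1)) s := by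
    have h1 := hsumP.hasSum
    have h2 : HasSum (fun n => ρ n) (∑' p : ℕ × ℕ, ρ p.1 * (1/2:ℝ)^(p.2+1)) :=
      h1.prod_fiberwise hfiber
    rwa [h2.unique hsum] at h1
  exact (Equiv.hasSum_iff (Nat.pairEquiv.symm)
    (f := fun p : ℕ × ℕ => ρ p.1 * (1/2:ℝ)^(p.2+1))).2 hP

lemma cseq_pos {ρ : ℕ → ℝ} (hpos : ∀ n, 0 < ρ n) (m : ℕ) : 0 < cseq ρ m := by
  unfold cseq
  have := hpos (Nat.pairEquiv.symm m).1
  positivity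

noncomputable def ff (ρ : ℕ → ℝ) (x : ℝ) : ℝ := ∑' m, cseq ρ m * eps m x

end SincAux


theorem tprod_sinc_is_characteristic_function (ρ : ℕ → ℝ) (hpos : ∀ n, 0 < ρ n)
    (s : ℝ) (hsum : HasSum ρ s) :
    ∃ μ : Measure ℝ, IsProbabilityMeasure μ ∧ μ (Set.Icc (-s) s) = 1 ∧
      ∀ k : ℝ, (∫ t : ℝ, Complex.exp (Complex.I * (k : ℂ) * (t : ℂ)) ∂μ) =
        ∏' n : ℕ, csinc ((ρ n * k : ℝ) : ℂ) := by
  classical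
  have hc : HasSum (SincAux.cseq ρ) s := SincAux.hasSum_cseq hpos hsum
  have hcpos : ∀ m, 0 < SincAux.cseq ρ m := SincAux.cseq_pos hpos
  have habs : ∀ x : ℝ, (fun m => |SincAux.cseq ρ m * SincAux.eps m x|) = SincAux.cseq ρ := by
    intro x
    funext m
    rw [abs_mul, SincAux.abs_eps, mul_one, abs_of_pos (hcpos m)]
  have hsx : ∀ x : ℝ, Summable (fun m => SincAux.cseq ρ m * SincAux.eps m x) := by
    intro x
    rw [← summable_abs_iff, habs x]
    exact hc.summable
  have hfb : ∀ x, |SincAux.ff ρ x| ≤ s := by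
    intro x
    unfold SincAux.ff
    have h1 : ‖∑' m, SincAux.cseq ρ m * SincAux.eps m x‖ ≤
        ∑' m, ‖SincAux.cseq ρ m * SincAux.eps m x‖ := by
      apply norm_tsum_le_tsum_norm
      simp only [Real.norm_eq_abs]
      rw [habs x]
      exact hc.summable
    simp only [Real.norm_eq_abs] at h1
    calc |∑' m, SincAux.cseq ρ m * SincAux.eps m x|
        ≤ ∑' m, |SincAux.cseq ρ m * SincAux.eps m x| := h1
      _ = ∑' m, SincAux.cseq ρ m := by rw [habs x]
      _ = s := hc.tsum_eq
  have hpartm : ∀ N : ℕ, Measurable (fun x => ∑ m ∈ Finset.range N,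
      SincAux.cseq ρ m * SincAux.eps m x) := by
    intro N
    apply Finset.measurable_sum
    intro m _
    exact (SincAux.eps_measurable m).const_mul (SincAux.cseq ρ m)
  have hfm : Measurable (SincAux.ff ρ) := by
    apply measurable_of_tendsto_metrizable hpartm
    rw [tendsto_pi_nhds]
    intro x
    exact (hsx x).hasSum.tendsto_sum_nat
  have hbprob : IsProbabilityMeasure (volume.restrict (Set.Ioc (0:ℝ) 1)) := by
    constructor
    rw [Measure.restrict_apply_univ, Real.volume_Ioc]
    norm_num
  refine ⟨(volume.restrict (Set.Ioc (0:ℝ) 1)).map (SincAux.ff ρ),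
    Measure.isProbabilityMeasure_map hfm.aemeasurable, ?_, ?_⟩
  · rw [Measure.map_apply hfm measurableSet_Icc]
    have hpre : SincAux.ff ρ ⁻¹' (Set.Icc (-s) s) = Set.univ := by
      rw [Set.eq_univ_iff_forall]
      intro x
      simp only [Set.mem_preimage, Set.mem_Icc, ← abs_le]
      exact hfb x
    rw [hpre]
    exact measure_univ
  · intro k
    have hmap : (∫ t : ℝ, Complex.exp (Complex.I * (k : ℂ) * (t : ℂ))
          ∂((volume.restrict (Set.Ioc (0:ℝ) 1)).map (SincAux.ff ρ))) =
        ∫ x in Set.Ioc (0:ℝ) 1, Complex.exp (Complex.I * (k : ℂ) * ((SincAux.ff ρ x : ℝ) : ℂ)) := by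
      rw [integral_map hfm.aemeasurable]
      exact Continuous.aestronglyMeasurable
        (Complex.continuous_exp.comp (continuous_const.mul Complex.continuous_ofReal))
    have hG : Multipliable (fun m => ((Real.cos (k * SincAux.cseq ρ m) : ℝ) : ℂ)) :=
      SincAux.multipliable_cos (hc.summable.mul_left k)
    -- the finite partial products of exponentials
    have hFeq : ∀ N (x : ℝ), (∏ m ∈ Finset.range N,
          Complex.exp (Complex.I * ((k * SincAux.cseq ρ m : ℝ) : ℂ) * ((SincAux.eps m x : ℝ) : ℂ)))
        = Complex.exp (Complex.I * (k : ℂ) *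
            ((∑ m ∈ Finset.range N, SincAux.cseq ρ m * SincAux.eps m x : ℝ) : ℂ)) := by
      intro N x
      rw [← Complex.exp_sum]
      congr 1
      rw [Complex.ofReal_sum, Finset.mul_sum]
      apply Finset.sum_congr rfl
      intro m _
      push_cast
      ring
    have hDCT : Tendsto (fun N => ∫ x in Set.Ioc (0:ℝ) 1, ∏ m ∈ Finset.range N,
          Complex.exp (Complex.I * ((k * SincAux.cseq ρ m : ℝ) : ℂ) * ((SincAux.eps m x : ℝ) : ℂ)))
        atTop (nhds (∫ x in Set.Ioc (0:ℝ) 1,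
          Complex.exp (Complex.I * (k : ℂ) * ((SincAux.ff ρ x : ℝ) : ℂ)))) := by
      apply MeasureTheory.tendsto_integral_of_dominated_convergence (fun _ => (1:ℝ))
      · intro N
        apply Measurable.aestronglyMeasurable
        apply Finset.measurable_prod
        intro m _
        exact Complex.measurable_exp.comp
          (measurable_const.mul (Complex.measurable_ofReal.comp (SincAux.eps_measurable m)))
      · exact integrable_const 1
      · intro N
        filter_upwards with x
        rw [norm_prod]
        apply le_of_eq
        apply Finset.prod_eq_one
        intro m _
        have h4 : Complex.I * ((k * SincAux.cseq ρ m : ℝ) : ℂ) * ((SincAux.eps m x : ℝ) : ℂ) =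
            Complex.I * (((k * SincAux.cseq ρ m) * SincAux.eps m x : ℝ) : ℂ) := by
          push_cast; ring
        rw [h4]
        exact SincAux.norm_exp_I_mul_real _
      · filter_upwards with x
        have hcont : Continuous (fun r : ℝ => Complex.exp (Complex.I * (k : ℂ) * (r : ℂ))) :=
          Complex.continuous_exp.comp (continuous_const.mul Complex.continuous_ofReal)
        have htend := (hcont.tendsto (SincAux.ff ρ x)).comp (hsx x).hasSum.tendsto_sum_nat
        apply htend.congr
        intro N
        exact (hFeq N x).symm
    have hIval : ∀ N, (∫ x in Set.Ioc (0:ℝ) 1, ∏ m ∈ Finset.range N,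
          Complex.exp (Complex.I * ((k * SincAux.cseq ρ m : ℝ) : ℂ) * ((SincAux.eps m x : ℝ) : ℂ)))
        = ∏ m ∈ Finset.range N, ((Real.cos (k * SincAux.cseq ρ m) : ℝ) : ℂ) := by
      intro N
      rw [← intervalIntegral.integral_of_le zero_le_one]
      exact SincAux.key N (fun m => k * SincAux.cseq ρ m)
    have hlim2 : Tendsto (fun N => ∏ m ∈ Finset.range N,
          ((Real.cos (k * SincAux.cseq ρ m) : ℝ) : ℂ)) atTop
        (nhds (∫ x in Set.Ioc (0:ℝ) 1,
          Complex.exp (Complex.I * (k : ℂ) * ((SincAux.ff ρ x : ℝ) : ℂ)))) := by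
      apply hDCT.congr
      intro N
      exact hIval N
    have hint_eq : (∫ x in Set.Ioc (0:ℝ) 1,
          Complex.exp (Complex.I * (k : ℂ) * ((SincAux.ff ρ x : ℝ) : ℂ)))
        = ∏' m, ((Real.cos (k * SincAux.cseq ρ m) : ℝ) : ℂ) :=
      tendsto_nhds_unique hlim2 hG.hasProd.tendsto_prod_nat
    -- reorganize the infinite product
    have hGfe : (fun m => ((Real.cos (k * SincAux.cseq ρ m) : ℝ) : ℂ)) =
        (fun p : ℕ × ℕ => ((Real.cos (k * (ρ p.1 * (1/2:ℝ)^(p.2+1))) : ℝ) : ℂ)) ∘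
          Nat.pairEquiv.symm := rfl
    have hQ : HasProd (fun p : ℕ × ℕ => ((Real.cos (k * (ρ p.1 * (1/2:ℝ)^(p.2+1))) : ℝ) : ℂ))
        (∏' m, ((Real.cos (k * SincAux.cseq ρ m) : ℝ) : ℂ)) := by
      apply (Equiv.hasProd_iff (Nat.pairEquiv.symm)
        (f := fun p : ℕ × ℕ => ((Real.cos (k * (ρ p.1 * (1/2:ℝ)^(p.2+1))) : ℝ) : ℂ))).1
      rw [← hGfe]
      exact hG.hasProd
    have hfib : ∀ n, HasProd (fun j : ℕ => ((Real.cos (k * (ρ n * (1/2:ℝ)^(j+1))) : ℝ) : ℂ))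
        (csinc ((ρ n * k : ℝ) : ℂ)) := by
      intro n
      have hv := SincAux.viete (ρ n * k)
      have heq : (fun j : ℕ => ((Real.cos ((ρ n * k) / 2^(j+1)) : ℝ) : ℂ)) =
          fun j : ℕ => ((Real.cos (k * (ρ n * (1/2:ℝ)^(j+1))) : ℝ) : ℂ) := by
        funext j
        have harg : (ρ n * k)/2^(j+1) = k * (ρ n * (1/2:ℝ)^(j+1)) := by
          rw [one_div, inv_pow]
          ring
        rw [harg]
      rwa [heq] at hv
    have hfinal : HasProd (fun n => csinc ((ρ n * k : ℝ) : ℂ))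
        (∏' m, ((Real.cos (k * SincAux.cseq ρ m) : ℝ) : ℂ)) :=
      hQ.prod_fiberwise hfib
    rw [hmap, hint_eq]
    exact hfinal.tprod_eq.symm
end

section
/- Let z ∈ ℂ with 0 < |z| < 1 and 2·Re(z²) > |z|²/π² (equivalently, 2·cos(2·arg z) > π^{-2}). Then |sin z / z| < 1. -/
set_option maxHeartbeats 800000 in
theorem abs_sinc_lt_one (z : ℂ) (h0 : 0 < ‖z‖) (h1 : ‖z‖ < 1)
    (h2 : 2 * (z ^ 2).re > ‖z‖ ^ 2 / Real.pi ^ 2) :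
    ‖Complex.sin z / z‖ < 1 := by
  have hz : z ≠ 0 := by
    intro h; simp [h] at h0
  set m : ℝ := ‖z‖ ^ 2 with hm
  have hm0 : 0 < m := by positivity
  have hm1 : m < 1 := by
    calc m = ‖z‖ ^ 2 := rfl
    _ < 1 := by nlinarith [norm_nonneg z]
  set u : ℝ := (z ^ 2).re with hu
  set v : ℝ := (z ^ 2).im with hv
  have habs2 : ‖z ^ 2‖ = m := by rw [norm_pow]
  have huv : u ^ 2 + v ^ 2 = m ^ 2 := by
    have := Complex.sq_norm (z ^ 2)
    rw [habs2, Complex.normSq_apply] at this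
    nlinarith [this]
  have hu_le : u ≤ m := by
    have := Complex.abs_re_le_norm (z ^ 2)
    rw [habs2] at this
    exact (abs_le.mp this).2
  have hpi : Real.pi ^ 2 < 10 := by nlinarith [Real.pi_lt_d2, Real.pi_pos]
  have hu20 : m / 20 < u := by
    have hp : (0:ℝ) < Real.pi ^ 2 := by positivity
    have h10 : m / 10 < m / Real.pi ^ 2 := div_lt_div_of_pos_left hm0 hp hpi
    linarith [h2]
  -- Step A: power series bound for sin
  have hb1 := Complex.exp_bound (x := z * Complex.I) (by simpa using h1.le) (n := 7) (by norm_num)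
  have hb2 := Complex.exp_bound (x := -(z * Complex.I)) (by simpa using h1.le) (n := 7) (by norm_num)
  norm_num [Nat.factorial] at hb1 hb2
  have hsum1 : ∑ k ∈ Finset.range 7, (z * Complex.I) ^ k / (Nat.factorial k) =
      1 + z * Complex.I + (z * Complex.I) ^ 2 / 2 + (z * Complex.I) ^ 3 / 6 +
        (z * Complex.I) ^ 4 / 24 + (z * Complex.I) ^ 5 / 120 + (z * Complex.I) ^ 6 / 720 := by
    simp [Finset.sum_range_succ, Nat.factorial]
  have hsum2 : ∑ k ∈ Finset.range 7, (-(z * Complex.I)) ^ k / (Nat.factorial k) =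
      1 + -(z * Complex.I) + (-(z * Complex.I)) ^ 2 / 2 + (-(z * Complex.I)) ^ 3 / 6 +
        (-(z * Complex.I)) ^ 4 / 24 + (-(z * Complex.I)) ^ 5 / 120 + (-(z * Complex.I)) ^ 6 / 720 := by
    simp [Finset.sum_range_succ, Nat.factorial]
  rw [hsum1] at hb1
  rw [hsum2] at hb2
  have key : Complex.sin z - (z - z ^ 3 / 6 + z ^ 5 / 120) =
      ((Complex.exp (-(z * Complex.I)) -
          (1 + -(z * Complex.I) + (-(z * Complex.I)) ^ 2 / 2 + (-(z * Complex.I)) ^ 3 / 6 +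
            (-(z * Complex.I)) ^ 4 / 24 + (-(z * Complex.I)) ^ 5 / 120 + (-(z * Complex.I)) ^ 6 / 720)) -
        (Complex.exp (z * Complex.I) -
          (1 + z * Complex.I + (z * Complex.I) ^ 2 / 2 + (z * Complex.I) ^ 3 / 6 +
            (z * Complex.I) ^ 4 / 24 + (z * Complex.I) ^ 5 / 120 + (z * Complex.I) ^ 6 / 720))) *
        Complex.I / 2 := by
    rw [Complex.sin, neg_mul]
    linear_combination (-(z ^ 5 / 120) * Complex.I ^ 4 +
      (-(z ^ 3) / 6 + z ^ 5 / 120) * Complex.I ^ 2 +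
      (-z + z ^ 3 / 6 - z ^ 5 / 120)) * Complex.I_sq
  have hA : ‖Complex.sin z - (z - z ^ 3 / 6 + z ^ 5 / 120)‖ ≤
      ‖z‖ ^ 7 / 4410 := by
    rw [key, norm_div, norm_mul, Complex.norm_I, Complex.norm_two, mul_one]
    have htri := norm_sub_le
      (Complex.exp (-(z * Complex.I)) -
          (1 + -(z * Complex.I) + (-(z * Complex.I)) ^ 2 / 2 + (-(z * Complex.I)) ^ 3 / 6 +
            (-(z * Complex.I)) ^ 4 / 24 + (-(z * Complex.I)) ^ 5 / 120 + (-(z * Complex.I)) ^ 6 / 720))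
      (Complex.exp (z * Complex.I) -
          (1 + z * Complex.I + (z * Complex.I) ^ 2 / 2 + (z * Complex.I) ^ 3 / 6 +
            (z * Complex.I) ^ 4 / 24 + (z * Complex.I) ^ 5 / 120 + (z * Complex.I) ^ 6 / 720))
    linarith [htri, hb1, hb2]
  -- Step B: divide by z
  have hdiv : Complex.sin z / z - (1 - z ^ 2 / 6 + z ^ 4 / 120) =
      (Complex.sin z - (z - z ^ 3 / 6 + z ^ 5 / 120)) / z := by
    field_simp
  have hB : ‖Complex.sin z / z - (1 - z ^ 2 / 6 + z ^ 4 / 120)‖ ≤ m ^ 3 / 4410 := by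
    rw [hdiv, norm_div]
    rw [div_le_iff₀ h0]
    calc ‖Complex.sin z - (z - z ^ 3 / 6 + z ^ 5 / 120)‖ ≤
        ‖z‖ ^ 7 / 4410 := hA
      _ = m ^ 3 / 4410 * ‖z‖ := by rw [hm]; ring
  -- Step C: bound the polynomial part
  set A : ℝ := 1 - u / 6 + (u ^ 2 - v ^ 2) / 120 with hA_def
  set B : ℝ := -(v / 6) + u * v / 60 with hB_def
  have hPAB : (1 - z ^ 2 / 6 + z ^ 4 / 120) = (A : ℂ) + (B : ℂ) * Complex.I := by
    have hw : (z ^ 2 : ℂ) = (u : ℂ) + (v : ℂ) * Complex.I := (Complex.re_add_im _).symm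
    have hz4 : (z ^ 4 : ℂ) = (z ^ 2) ^ 2 := by ring
    rw [hz4, hw, hA_def, hB_def]
    push_cast
    linear_combination ((v : ℂ) ^ 2 / 120) * Complex.I_sq
  have habsP : ‖1 - z ^ 2 / 6 + z ^ 4 / 120‖ ^ 2 = A ^ 2 + B ^ 2 := by
    rw [hPAB, Complex.sq_norm, Complex.normSq_add_mul_I]
  have hA2 : A = 1 - u / 6 + (2 * u ^ 2 - m ^ 2) / 120 := by
    rw [hA_def]; linear_combination (-1 / 120 : ℝ) * huv
  have hB2 : B ^ 2 = (m ^ 2 - u ^ 2) * (u - 10) ^ 2 / 3600 := by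
    rw [hB_def]; linear_combination ((u - 10) ^ 2 / 3600 : ℝ) * huv
  have hkey : A ^ 2 + B ^ 2 < (1 - m ^ 3 / 4410) ^ 2 := by
    rw [hA2, hB2]
    have hexpand : (1 - u / 6 + (2 * u ^ 2 - m ^ 2) / 120) ^ 2 +
        (m ^ 2 - u ^ 2) * (u - 10) ^ 2 / 3600 =
        1 - u / 3 + u ^ 2 / 30 + m ^ 2 / 90 - m ^ 2 * u / 360 + m ^ 4 / 14400 := by ring
    have hrhs : (1 - m ^ 3 / 4410) ^ 2 = 1 - m ^ 3 / 2205 + m ^ 6 / 19448100 := by ring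
    rw [hexpand, hrhs]
    have hu0 : (0:ℝ) < u := by linarith
    have hu1 : u ≤ 1 := by linarith
    have hq1 : u ^ 2 ≤ u := pow_le_of_le_one hu0.le hu1 (by norm_num)
    have hq2 : m ^ 2 ≤ m := pow_le_of_le_one hm0.le hm1.le (by norm_num)
    have hq3 : m ^ 3 ≤ m := pow_le_of_le_one hm0.le hm1.le (by norm_num)
    have hq4 : m ^ 4 ≤ m := pow_le_of_le_one hm0.le hm1.le (by norm_num)
    have hq5 : (0:ℝ) ≤ m ^ 2 * u := by positivity
    have hq6 : (0:ℝ) ≤ m ^ 6 := by positivity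
    linarith
  have hm3 : (0:ℝ) < 1 - m ^ 3 / 4410 := by
    have : m ^ 3 ≤ m := pow_le_of_le_one hm0.le hm1.le (by norm_num)
    linarith
  have hPlt : ‖1 - z ^ 2 / 6 + z ^ 4 / 120‖ < 1 - m ^ 3 / 4410 := by
    have h2' : ‖1 - z ^ 2 / 6 + z ^ 4 / 120‖ ^ 2 < (1 - m ^ 3 / 4410) ^ 2 := by
      rw [habsP]; exact hkey
    exact lt_of_pow_lt_pow_left₀ 2 hm3.le h2'
  calc ‖Complex.sin z / z‖ ≤
      ‖1 - z ^ 2 / 6 + z ^ 4 / 120‖ +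
        ‖Complex.sin z / z - (1 - z ^ 2 / 6 + z ^ 4 / 120)‖ := by
        have := norm_add_le (1 - z ^ 2 / 6 + z ^ 4 / 120)
          (Complex.sin z / z - (1 - z ^ 2 / 6 + z ^ 4 / 120))
        simpa using this
    _ ≤ ‖1 - z ^ 2 / 6 + z ^ 4 / 120‖ + m ^ 3 / 4410 := by linarith
    _ < (1 - m ^ 3 / 4410) + m ^ 3 / 4410 := by linarith
    _ = 1 := by ring
end

section
/- Let 0 < α ≤ 1 and let η : (−∞,0] → (0,∞) be continuous. Assume there are constants c > 0 and k₀ ≥ 0 such that η(−k) ≥ c·e^{k^α} for all k ≥ k₀. Then there exist constants C > 0 and τ₀ > 0 such that K_η(τ) ≤ C·τ^{1−α}·e^{−(πτ)^α} for all τ ≥ τ₀. (Second case of Lemma 6 of the paper.) -/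
open MeasureTheory

section Aux
open Set Filter

lemma hasDerivF_aux (α : ℝ) (hα0 : 0 < α) (u : ℝ) (hu : 0 < u) :
    HasDerivAt (fun u : ℝ => α⁻¹ * (u ^ (1-α) * Real.exp (-(u^α))))
      (((1-α)/α) * u ^ (-α) * Real.exp (-(u^α)) - Real.exp (-(u^α))) u := by
  have h1 : HasDerivAt (fun u : ℝ => u ^ (1-α)) ((1-α) * u ^ (1-α-1)) u :=
    Real.hasDerivAt_rpow_const (Or.inl hu.ne')
  have h2 : HasDerivAt (fun u : ℝ => u ^ α) (α * u ^ (α-1)) u :=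
    Real.hasDerivAt_rpow_const (Or.inl hu.ne')
  have h3 : HasDerivAt (fun u : ℝ => Real.exp (-(u^α)))
      (-(α * u ^ (α-1)) * Real.exp (-(u^α))) u := by
    simpa [mul_comm] using (h2.neg.exp)
  have h4 := ((h1.mul h3).const_mul α⁻¹)
  refine h4.congr_deriv (Eq.symm ?_)
  have e1 : (1:ℝ)-α-1 = -α := by ring
  have e2 : u ^ (1-α) * u ^ (α-1) = 1 := by
    rw [← Real.rpow_add hu]; norm_num
  rw [e1]
  field_simp
  linear_combination α * e2

lemma Ftendsto_aux (α : ℝ) (hα0 : 0 < α) :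
    Tendsto (fun u : ℝ => -(α⁻¹ * (u ^ (1-α) * Real.exp (-(u^α))))) atTop (nhds 0) := by
  have h := (tendsto_rpow_mul_exp_neg_mul_atTop_nhds_zero ((1-α)/α) 1 one_pos).comp
    (tendsto_rpow_atTop hα0)
  have h2 : Tendsto (fun u : ℝ => u ^ (1-α) * Real.exp (-(u^α))) atTop (nhds 0) := by
    apply h.congr'
    filter_upwards [eventually_ge_atTop (1:ℝ)] with u hu
    have hu0 : (0:ℝ) ≤ u := by linarith
    simp only [Function.comp]
    have e : α * ((1-α)/α) = 1 - α := by field_simp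
    rw [← Real.rpow_mul hu0, e, neg_one_mul]
  have := (h2.const_mul α⁻¹).neg
  simpa using this

lemma tail_bound_aux (α : ℝ) (hα0 : 0 < α) (s : ℝ) (hs1 : 1 ≤ s)
    (hsA : 2 * (1 - α) ≤ α * s ^ α) :
    IntegrableOn (fun u : ℝ => Real.exp (-(u^α))) (Set.Ioi s) ∧
    ∫ u in Set.Ioi s, Real.exp (-(u^α)) ≤ 2 * α⁻¹ * (s ^ (1-α) * Real.exp (-(s^α))) := by
  set g : ℝ → ℝ := fun u => -(α⁻¹ * (u ^ (1-α) * Real.exp (-(u^α)))) with hg_def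
  set g' : ℝ → ℝ := fun u => Real.exp (-(u^α)) - ((1-α)/α) * u ^ (-α) * Real.exp (-(u^α))
    with hg'_def
  have hderiv : ∀ u ∈ Ici s, HasDerivAt g (g' u) u := by
    intro u hu
    have hu0 : 0 < u := lt_of_lt_of_le one_pos (le_trans hs1 hu)
    exact (hasDerivF_aux α hα0 u hu0).neg.congr_deriv (by simp only [hg'_def]; ring)
  have hhalf : ∀ u ∈ Ioi s, Real.exp (-(u^α)) ≤ 2 * g' u := by
    intro u hu
    have hus : s ≤ u := le_of_lt hu
    have hu0 : (0:ℝ) < u := lt_of_lt_of_le one_pos (le_trans hs1 hus)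
    have hsα : s ^ α ≤ u ^ α := Real.rpow_le_rpow (by linarith) hus hα0.le
    have huα : (0:ℝ) < u ^ α := Real.rpow_pos_of_pos hu0 α
    have hinv : u ^ (-α) = (u ^ α)⁻¹ := Real.rpow_neg hu0.le α
    have hle : ((1-α)/α) * u ^ (-α) ≤ 1/2 := by
      have hPinv : (u^α) * (u^α)⁻¹ = 1 := mul_inv_cancel₀ huα.ne'
      have h2 : 2*(1-α) ≤ α * (u^α) := by nlinarith
      have hinvpos : 0 < (u^α)⁻¹ := by positivity
      rw [hinv, div_mul_eq_mul_div, div_le_div_iff₀ hα0 two_pos]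
      nlinarith [mul_le_mul_of_nonneg_right h2 hinvpos.le]
    have hE : (0:ℝ) < Real.exp (-(u^α)) := Real.exp_pos _
    simp only [g']
    nlinarith
  have g'pos : ∀ u ∈ Ioi s, 0 ≤ g' u := by
    intro u hu
    have := hhalf u hu
    have hE : (0:ℝ) < Real.exp (-(u^α)) := Real.exp_pos _
    linarith
  have hg0 : Tendsto g atTop (nhds 0) := Ftendsto_aux α hα0
  have hint_g' : IntegrableOn g' (Ioi s) :=
    integrableOn_Ioi_deriv_of_nonneg' hderiv g'pos hg0
  have hval : ∫ u in Ioi s, g' u = 0 - g s :=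
    integral_Ioi_of_hasDerivAt_of_nonneg' hderiv g'pos hg0
  have hmeasE : AEStronglyMeasurable (fun u : ℝ => Real.exp (-(u^α)))
      (volume.restrict (Ioi s)) :=
    (Real.continuous_exp.comp
      (Real.continuous_rpow_const hα0.le).neg).aestronglyMeasurable
  have hintE : IntegrableOn (fun u : ℝ => Real.exp (-(u^α))) (Ioi s) := by
    apply Integrable.mono' (hint_g'.const_mul 2) hmeasE
    rw [ae_restrict_iff' measurableSet_Ioi]
    filter_upwards with u
    intro hu
    rw [Real.norm_eq_abs, abs_of_pos (Real.exp_pos _)]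
    exact hhalf u hu
  refine ⟨hintE, ?_⟩
  calc ∫ u in Ioi s, Real.exp (-(u^α)) ≤ ∫ u in Ioi s, 2 * g' u :=
        setIntegral_mono_on hintE (hint_g'.const_mul 2) measurableSet_Ioi hhalf
    _ = 2 * ∫ u in Ioi s, g' u := integral_const_mul 2 _
    _ = 2 * (α⁻¹ * (s ^ (1-α) * Real.exp (-(s^α)))) := by rw [hval]; simp [g]
    _ = 2 * α⁻¹ * (s ^ (1-α) * Real.exp (-(s^α))) := by ring

lemma mono_sub_rpow_aux (α : ℝ) (hα0 : 0 < α) (hα1 : α ≤ 1) :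
    MonotoneOn (fun t : ℝ => t - t ^ α) (Set.Ici 1) := by
  apply monotoneOn_of_deriv_nonneg (convex_Ici 1)
  · exact (continuous_id.sub (Real.continuous_rpow_const hα0.le)).continuousOn
  · intro t ht
    rw [interior_Ici] at ht
    have ht0 : (0:ℝ) < t := lt_trans one_pos ht
    exact ((hasDerivAt_id t).sub
      (Real.hasDerivAt_rpow_const (Or.inl ht0.ne'))).differentiableAt.differentiableWithinAt
  · intro t ht
    rw [interior_Ici] at ht
    have ht0 : (0:ℝ) < t := lt_trans one_pos ht
    have hd : deriv (fun t : ℝ => t - t ^ α) t = 1 - α * t ^ (α-1) := by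
      exact ((hasDerivAt_id t).sub
        (Real.hasDerivAt_rpow_const (Or.inl ht0.ne'))).deriv
    rw [hd]
    have h1 : t ^ (α-1) ≤ 1 := Real.rpow_le_one_of_one_le_of_nonpos (le_of_lt ht) (by linarith)
    have h2 : (0:ℝ) ≤ t ^ (α-1) := Real.rpow_nonneg ht0.le _
    nlinarith

end Aux

/-- `K_η(τ) = ∫_{πτ}^∞ [inf_{k ≥ 0} (1 + e^{u−k})·η(−k)]⁻¹ du`, valued in `[0,∞]`
(the integrand is `+∞` where the infimum vanishes). -/
noncomputable def Keta (η : ℝ → ℝ) (τ : ℝ) : ENNReal :=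
  ∫⁻ u in Set.Ici (Real.pi * τ),
    (ENNReal.ofReal (⨅ k : {k : ℝ // 0 ≤ k}, (1 + Real.exp (u - k.1)) * η (-k.1)))⁻¹

theorem Keta_upper_bound_exp (α : ℝ) (hα0 : 0 < α) (hα1 : α ≤ 1)
    (η : ℝ → ℝ) (hη_cont : ContinuousOn η (Set.Iic 0))
    (hη_pos : ∀ x ≤ (0 : ℝ), 0 < η x)
    (c : ℝ) (hc : 0 < c) (k₀ : ℝ) (hk₀ : 0 ≤ k₀)
    (hη_gr : ∀ k ≥ k₀, c * Real.exp (k ^ α) ≤ η (-k)) :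
    ∃ C > (0 : ℝ), ∃ τ₀ > (0 : ℝ), ∀ τ ≥ τ₀,
      Keta η τ ≤ ENNReal.ofReal (C * τ ^ (1 - α) * Real.exp (-(Real.pi * τ) ^ α)) := by
  set k₁ : ℝ := max k₀ 1 with hk₁_def
  have hk₁1 : (1:ℝ) ≤ k₁ := le_max_right _ _
  have hk₁0 : (0:ℝ) ≤ k₁ := by linarith
  -- minimum of η on [-k₁, 0]
  obtain ⟨x₀, hx₀mem, hx₀min⟩ :=
    (isCompact_Icc : IsCompact (Set.Icc (-k₁) (0:ℝ))).exists_isMinOn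
      ⟨0, by constructor <;> linarith⟩
      (hη_cont.mono (fun x hx => hx.2))
  set m : ℝ := η x₀ with hm_def
  have hm : 0 < m := hη_pos x₀ hx₀mem.2
  have hm_le : ∀ k : ℝ, 0 ≤ k → k ≤ k₁ → m ≤ η (-k) := by
    intro k h1 h2
    exact hx₀min ⟨by linarith, by linarith⟩
  set c₂ : ℝ := min (m * Real.exp (-k₁)) c with hc₂_def
  have hc₂ : 0 < c₂ := lt_min (by positivity) hc
  set s₁ : ℝ := max (max 1 k₁) ((2*(1-α)/α) ^ (1/α)) with hs₁_def
  have hs₁1 : (1:ℝ) ≤ s₁ := le_trans (le_max_left 1 k₁) (le_max_left _ _)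
  have hs₁k₁ : k₁ ≤ s₁ := le_trans (le_max_right 1 k₁) (le_max_left _ _)
  set C : ℝ := c₂⁻¹ * 2 * α⁻¹ * Real.pi ^ (1-α) with hC_def
  have hC : 0 < C := by positivity
  refine ⟨C, hC, s₁ / Real.pi, by positivity, ?_⟩
  intro τ hτ
  have hτ0 : 0 < τ := lt_of_lt_of_le (by positivity) hτ
  set s : ℝ := Real.pi * τ with hs_def
  have hss₁ : s₁ ≤ s := by
    rw [hs_def]
    calc s₁ = Real.pi * (s₁ / Real.pi) := by field_simp
      _ ≤ Real.pi * τ := by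
          exact mul_le_mul_of_nonneg_left hτ Real.pi_pos.le
  have hs1 : (1:ℝ) ≤ s := le_trans hs₁1 hss₁
  have hsk₁ : k₁ ≤ s := le_trans hs₁k₁ hss₁
  have hsA : 2 * (1 - α) ≤ α * s ^ α := by
    have hnn : (0:ℝ) ≤ 2*(1-α)/α := by
      apply div_nonneg _ hα0.le; linarith
    have h1 : (2*(1-α)/α) ^ (1/α) ≤ s := le_trans (le_max_right _ _) hss₁
    have h2 : ((2*(1-α)/α) ^ (1/α)) ^ α ≤ s ^ α :=
      Real.rpow_le_rpow (Real.rpow_nonneg hnn _) h1 hα0.le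
    rw [one_div, Real.rpow_inv_rpow hnn hα0.ne'] at h2
    calc 2 * (1-α) = α * (2*(1-α)/α) := by field_simp
      _ ≤ α * s ^ α := mul_le_mul_of_nonneg_left h2 hα0.le
  -- pointwise bound on the infimum
  have key : ∀ u, u ∈ Set.Ici s →
      (ENNReal.ofReal (⨅ k : {k : ℝ // 0 ≤ k}, (1 + Real.exp (u - k.1)) * η (-k.1)))⁻¹
        ≤ ENNReal.ofReal (c₂⁻¹ * Real.exp (-(u^α))) := by
    intro u hu
    have hu1 : (1:ℝ) ≤ u := le_trans hs1 hu
    have huk₁ : k₁ ≤ u := le_trans hsk₁ hu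
    have hu0 : (0:ℝ) < u := by linarith
    have huα : u ^ α ≤ u := by
      have := Real.rpow_le_rpow_of_exponent_le hu1 hα1
      rwa [Real.rpow_one] at this
    have hinf : c₂ * Real.exp (u^α)
        ≤ ⨅ k : {k : ℝ // 0 ≤ k}, (1 + Real.exp (u - k.1)) * η (-k.1) := by
      apply le_ciInf
      rintro ⟨k, hk⟩
      dsimp only
      have hηpos : 0 < η (-k) := hη_pos (-k) (by linarith)
      rcases le_or_gt k k₁ with hkk₁ | hkk₁
      · -- small k
        have hηk : m ≤ η (-k) := hm_le k hk hkk₁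
        have h1 : Real.exp (u - k₁) ≤ 1 + Real.exp (u - k) := by
          have := Real.exp_le_exp.2 (by linarith : u - k₁ ≤ u - k)
          linarith
        have h2 : c₂ * Real.exp (u^α) ≤ Real.exp (u - k₁) * m := by
          have e1 : m * Real.exp (-k₁) * Real.exp (u^α) = m * Real.exp (u^α - k₁) := by
            rw [mul_assoc, ← Real.exp_add]; ring_nf
          have e2 : Real.exp (u^α - k₁) ≤ Real.exp (u - k₁) :=
            Real.exp_le_exp.2 (by linarith)
          calc c₂ * Real.exp (u^α) ≤ (m * Real.exp (-k₁)) * Real.exp (u^α) :=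
                mul_le_mul_of_nonneg_right (min_le_left _ _) (Real.exp_pos _).le
            _ = m * Real.exp (u^α - k₁) := e1
            _ ≤ m * Real.exp (u - k₁) := mul_le_mul_of_nonneg_left e2 hm.le
            _ = Real.exp (u - k₁) * m := mul_comm _ _
        calc c₂ * Real.exp (u^α) ≤ Real.exp (u - k₁) * m := h2
          _ ≤ (1 + Real.exp (u - k)) * η (-k) :=
              mul_le_mul h1 hηk hm.le (by positivity)
      · -- large k
        have hk1 : (1:ℝ) ≤ k := le_trans hk₁1 hkk₁.le
        have hηk : c * Real.exp (k^α) ≤ η (-k) :=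
          hη_gr k (le_trans (le_max_left k₀ 1) hkk₁.le)
        rcases le_or_gt k u with hku | hku
        · -- k ≤ u
          have hmono : k - k^α ≤ u - u^α :=
            mono_sub_rpow_aux α hα0 hα1 hk1 hu1 hku
          have hexp : Real.exp (u^α) ≤ Real.exp (u - k + k^α) :=
            Real.exp_le_exp.2 (by linarith)
          calc c₂ * Real.exp (u^α) ≤ c * Real.exp (u^α) :=
                mul_le_mul_of_nonneg_right (min_le_right _ _) (Real.exp_pos _).le
            _ ≤ c * Real.exp (u - k + k^α) := mul_le_mul_of_nonneg_left hexp hc.le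
            _ = Real.exp (u - k) * (c * Real.exp (k^α)) := by
                rw [Real.exp_add]; ring
            _ ≤ Real.exp (u - k) * η (-k) :=
                mul_le_mul_of_nonneg_left hηk (Real.exp_pos _).le
            _ ≤ (1 + Real.exp (u - k)) * η (-k) := by nlinarith
        · -- u < k
          have hαk : u ^ α ≤ k ^ α := Real.rpow_le_rpow hu0.le hku.le hα0.le
          calc c₂ * Real.exp (u^α) ≤ c * Real.exp (k^α) := by
                have := Real.exp_le_exp.2 hαk
                have h := min_le_right (m * Real.exp (-k₁)) c
                nlinarith [Real.exp_pos (u^α)]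
            _ ≤ η (-k) := hηk
            _ ≤ (1 + Real.exp (u - k)) * η (-k) := by nlinarith [Real.exp_pos (u - k)]
    have hpos : 0 < c₂ * Real.exp (u^α) := by positivity
    calc (ENNReal.ofReal (⨅ k : {k : ℝ // 0 ≤ k}, (1 + Real.exp (u - k.1)) * η (-k.1)))⁻¹
        ≤ (ENNReal.ofReal (c₂ * Real.exp (u^α)))⁻¹ := by
          exact ENNReal.inv_le_inv.2 (ENNReal.ofReal_le_ofReal hinf)
      _ = ENNReal.ofReal ((c₂ * Real.exp (u^α))⁻¹) :=
          (ENNReal.ofReal_inv_of_pos hpos).symm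
      _ = ENNReal.ofReal (c₂⁻¹ * Real.exp (-(u^α))) := by
          rw [mul_inv, Real.exp_neg]
  -- tail integral bound
  obtain ⟨hintE, htail⟩ := tail_bound_aux α hα0 s hs1 hsA
  have hintE' : IntegrableOn (fun u : ℝ => c₂⁻¹ * Real.exp (-(u^α))) (Set.Ici s) := by
    rw [integrableOn_Ici_iff_integrableOn_Ioi]
    exact hintE.const_mul _
  have hmeas : Measurable fun u : ℝ => ENNReal.ofReal (c₂⁻¹ * Real.exp (-(u^α))) :=
    ENNReal.measurable_ofReal.comp
      ((Real.continuous_exp.comp (Real.continuous_rpow_const hα0.le).neg).measurable.const_mul _)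
  calc Keta η τ
      ≤ ∫⁻ u in Set.Ici s, ENNReal.ofReal (c₂⁻¹ * Real.exp (-(u^α))) := by
        exact setLIntegral_mono hmeas key
    _ = ENNReal.ofReal (∫ u in Set.Ici s, c₂⁻¹ * Real.exp (-(u^α))) := by
        rw [← ofReal_integral_eq_lintegral_ofReal hintE'
          (Filter.Eventually.of_forall (fun u => by positivity))]
    _ ≤ ENNReal.ofReal (C * τ ^ (1 - α) * Real.exp (-(Real.pi * τ) ^ α)) := by
        apply ENNReal.ofReal_le_ofReal
        rw [MeasureTheory.integral_Ici_eq_integral_Ioi, integral_const_mul]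
        have hπτ : s ^ (1-α) = Real.pi ^ (1-α) * τ ^ (1-α) :=
          Real.mul_rpow Real.pi_pos.le hτ0.le
        calc c₂⁻¹ * ∫ u in Set.Ioi s, Real.exp (-(u^α))
            ≤ c₂⁻¹ * (2 * α⁻¹ * (s ^ (1-α) * Real.exp (-(s^α)))) := by
              apply mul_le_mul_of_nonneg_left htail (by positivity)
          _ = C * τ ^ (1 - α) * Real.exp (-(Real.pi * τ) ^ α) := by
              rw [hC_def, hπτ, hs_def]; ring
end

section
/- Let n > 1 be real and let η : (−∞,0] → (0,∞) be continuous. Assume there are constants c > 0 and k₀ ≥ 1 such that η(−k) ≥ c·k^n for all k ≥ k₀. Then there exist constants C > 0 and τ₀ > 0 such that K_η(τ) ≤ C·τ^{1−n} for all τ ≥ τ₀. (First case of Lemma 6 of the paper.) -/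
open MeasureTheory

theorem Keta_upper_bound_poly (n : ℝ) (hn : 1 < n)
    (η : ℝ → ℝ) (hη_cont : ContinuousOn η (Set.Iic 0))
    (hη_pos : ∀ x ≤ (0 : ℝ), 0 < η x)
    (c : ℝ) (hc : 0 < c) (k₀ : ℝ) (hk₀ : 1 ≤ k₀)
    (hη_gr : ∀ k ≥ k₀, c * k ^ n ≤ η (-k)) :
    ∃ C > (0 : ℝ), ∃ τ₀ > (0 : ℝ), ∀ τ ≥ τ₀,
      Keta η τ ≤ ENNReal.ofReal (C * τ ^ (1 - n)) := by
  haveI : Nonempty {k : ℝ // 0 ≤ k} := ⟨⟨0, le_refl 0⟩⟩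
  -- minimum of η on [-k₀, 0]
  obtain ⟨x₀, hx₀mem, hx₀min⟩ := (isCompact_Icc (a := -k₀) (b := 0)).exists_isMinOn
    (Set.nonempty_Icc.2 (by linarith)) (hη_cont.mono (fun x hx => hx.2))
  have hm₀pos : 0 < η x₀ := hη_pos x₀ hx₀mem.2
  set A : ℝ := min (η x₀) (c * 2 ^ (-n)) with hA
  have hApos : 0 < A := lt_min hm₀pos (mul_pos hc (Real.rpow_pos_of_pos two_pos _))
  have h2n1 : (2:ℝ) ^ (-n) ≤ 1 :=
    Real.rpow_le_one_of_one_le_of_nonpos (by norm_num) (by linarith)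
  have hAc : A ≤ c := le_trans (min_le_right _ _) (by nlinarith)
  -- choose u₁
  have h1 : ∀ᶠ u in Filter.atTop, (1:ℝ) ≤ Real.exp ((1/2) * u) / u ^ n :=
    (tendsto_exp_mul_div_rpow_atTop n (1/2) (by norm_num)).eventually_ge_atTop 1
  have h2 : ∀ᶠ u in Filter.atTop, Real.exp k₀ ≤ Real.exp (1 * u) / u ^ n :=
    (tendsto_exp_mul_div_rpow_atTop n 1 one_pos).eventually_ge_atTop _
  have h3 : ∀ᶠ u in Filter.atTop, max k₀ 1 ≤ u := Filter.eventually_ge_atTop _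
  obtain ⟨u₁, hu₁⟩ := Filter.eventually_atTop.1 ((h1.and h2).and h3)
  -- key pointwise lower bound on the infimum
  have key : ∀ u ≥ u₁, ∀ k : ℝ, 0 ≤ k →
      A * u ^ n ≤ (1 + Real.exp (u - k)) * η (-k) := by
    intro u hu k hk
    obtain ⟨⟨hP1, hP2⟩, hP3⟩ := hu₁ u hu
    have hu1 : (1:ℝ) ≤ u := le_trans (le_max_right _ _) hP3
    have huk₀ : k₀ ≤ u := le_trans (le_max_left _ _) hP3
    have hupos : (0:ℝ) < u := by linarith
    have hun_pos : (0:ℝ) < u ^ n := Real.rpow_pos_of_pos hupos n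
    have hP1' : u ^ n ≤ Real.exp (u / 2) := by
      rw [le_div_iff₀ hun_pos] at hP1
      calc u ^ n ≤ Real.exp ((1/2) * u) := by linarith
        _ = Real.exp (u / 2) := by ring_nf
    have hP2' : u ^ n ≤ Real.exp (u - k₀) := by
      rw [le_div_iff₀ hun_pos] at hP2
      rw [Real.exp_sub, le_div_iff₀ (Real.exp_pos _)]
      calc u ^ n * Real.exp k₀ = Real.exp k₀ * u ^ n := by ring
        _ ≤ Real.exp (1 * u) := hP2
        _ = Real.exp u := by rw [one_mul]
    rcases le_or_gt k k₀ with hkk₀ | hkk₀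
    · -- small k : use minimum of η
      have hηk : η x₀ ≤ η (-k) := hx₀min ⟨by linarith, by linarith⟩
      have hexp : Real.exp (u - k₀) ≤ 1 + Real.exp (u - k) := by
        have := Real.exp_le_exp.2 (by linarith : u - k₀ ≤ u - k)
        linarith
      calc A * u ^ n ≤ η x₀ * Real.exp (u - k₀) := by
            apply mul_le_mul (min_le_left _ _) hP2' hun_pos.le hm₀pos.le
        _ ≤ (1 + Real.exp (u - k)) * η (-k) := by
            rw [mul_comm]
            exact mul_le_mul hexp hηk hm₀pos.le (by positivity)
    · -- k > k₀
      have hck : c * k ^ n ≤ η (-k) := hη_gr k hkk₀.le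
      have hkpos : (0:ℝ) < k := by linarith
      have hexp1 : (1:ℝ) ≤ 1 + Real.exp (u - k) := by linarith [Real.exp_pos (u - k)]
      rcases le_or_gt u k with hukk | hukk
      · -- k ≥ u
        have : c * u ^ n ≤ c * k ^ n :=
          mul_le_mul_of_nonneg_left (Real.rpow_le_rpow hupos.le hukk (by linarith)) hc.le
        calc A * u ^ n ≤ c * u ^ n := mul_le_mul_of_nonneg_right hAc hun_pos.le
          _ ≤ c * k ^ n := this
          _ ≤ 1 * η (-k) := by rw [one_mul]; linarith
          _ ≤ (1 + Real.exp (u - k)) * η (-k) :=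
              mul_le_mul_of_nonneg_right hexp1 (hη_pos (-k) (by linarith)).le
      · rcases le_or_gt (u - k) k with ht | ht
        · -- t ≤ k : u ≤ 2k
          have h2k : u ^ n ≤ (2*k) ^ n := Real.rpow_le_rpow hupos.le (by linarith) (by linarith)
          have h2k' : (2*k) ^ n = 2 ^ n * k ^ n := Real.mul_rpow (by norm_num) hkpos.le
          have hA2 : A * u ^ n ≤ c * 2 ^ (-n) * (2 ^ n * k ^ n) := by
            apply mul_le_mul (min_le_right _ _) (h2k.trans_eq h2k') hun_pos.le
            positivity
          have h2n : (2:ℝ) ^ (-n) * 2 ^ n = 1 := by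
            rw [← Real.rpow_add two_pos]; simp
          calc A * u ^ n ≤ c * 2 ^ (-n) * (2 ^ n * k ^ n) := hA2
            _ = c * k ^ n := by rw [← mul_assoc, mul_assoc c, h2n]; ring
            _ ≤ 1 * η (-k) := by rw [one_mul]; linarith
            _ ≤ (1 + Real.exp (u - k)) * η (-k) :=
                mul_le_mul_of_nonneg_right hexp1 (hη_pos (-k) (by linarith)).le
        · -- t > k : t > u/2
          have hkn1 : (1:ℝ) ≤ k ^ n :=
            Real.one_le_rpow (by linarith) (by linarith)
          have hexpt : u ^ n ≤ Real.exp (u - k) :=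
            hP1'.trans (Real.exp_le_exp.2 (by linarith))
          calc A * u ^ n ≤ c * Real.exp (u - k) := by
                apply mul_le_mul hAc hexpt hun_pos.le hc.le
            _ = Real.exp (u - k) * (c * 1) := by ring
            _ ≤ Real.exp (u - k) * (c * k ^ n) := by
                apply mul_le_mul_of_nonneg_left _ (Real.exp_pos _).le
                exact mul_le_mul_of_nonneg_left hkn1 hc.le
            _ ≤ Real.exp (u - k) * η (-k) := by
                apply mul_le_mul_of_nonneg_left hck (Real.exp_pos _).le
            _ ≤ (1 + Real.exp (u - k)) * η (-k) := by
                apply mul_le_mul_of_nonneg_right _ (hη_pos (-k) (by linarith)).le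
                linarith [Real.exp_pos (u - k)]
  clear_value A
  clear hA
  -- choose constants
  refine ⟨A⁻¹ * Real.pi ^ (1 - n) / (n - 1),
    div_pos (mul_pos (inv_pos.2 hApos) (Real.rpow_pos_of_pos Real.pi_pos _)) (by linarith),
    max u₁ 1 / Real.pi,
    div_pos (lt_of_lt_of_le one_pos (le_max_right _ _)) Real.pi_pos, ?_⟩
  intro τ hτ
  have hπ := Real.pi_pos
  have hτpos : 0 < τ :=
    lt_of_lt_of_le (div_pos (lt_of_lt_of_le one_pos (le_max_right _ _)) Real.pi_pos) hτ
  have hπτ : max u₁ 1 ≤ Real.pi * τ := by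
    calc max u₁ 1 = Real.pi * (max u₁ 1 / Real.pi) := by field_simp
      _ ≤ Real.pi * τ := mul_le_mul_of_nonneg_left hτ hπ.le
  set a := Real.pi * τ with ha
  have ha1 : (1:ℝ) ≤ a := le_trans (le_max_right _ _) hπτ
  have hau₁ : u₁ ≤ a := le_trans (le_max_left _ _) hπτ
  have hapos : (0:ℝ) < a := by linarith
  -- bound the integrand
  have hbound : ∀ u ∈ Set.Ici a,
      (ENNReal.ofReal (⨅ k : {k : ℝ // 0 ≤ k}, (1 + Real.exp (u - k.1)) * η (-k.1)))⁻¹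
        ≤ ENNReal.ofReal (A⁻¹ * u ^ (-n)) := by
    intro u hu
    have hu' : u₁ ≤ u := le_trans hau₁ hu
    have hupos : (0:ℝ) < u := lt_of_lt_of_le hapos hu
    have hAun : 0 < A * u ^ n := mul_pos hApos (Real.rpow_pos_of_pos hupos n)
    have hinf : A * u ^ n ≤ ⨅ k : {k : ℝ // 0 ≤ k}, (1 + Real.exp (u - k.1)) * η (-k.1) :=
      le_ciInf fun k => key u hu' k.1 k.2
    calc (ENNReal.ofReal (⨅ k : {k : ℝ // 0 ≤ k}, (1 + Real.exp (u - k.1)) * η (-k.1)))⁻¹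
        ≤ (ENNReal.ofReal (A * u ^ n))⁻¹ :=
          ENNReal.inv_le_inv' (ENNReal.ofReal_le_ofReal hinf)
      _ = ENNReal.ofReal ((A * u ^ n)⁻¹) := (ENNReal.ofReal_inv_of_pos hAun).symm
      _ = ENNReal.ofReal (A⁻¹ * u ^ (-n)) := by
          rw [mul_inv, Real.rpow_neg hupos.le]
  have hmeas : Measurable fun u : ℝ => ENNReal.ofReal (A⁻¹ * u ^ (-n)) := by
    measurability
  have step1 : Keta η τ ≤ ∫⁻ u in Set.Ici a, ENNReal.ofReal (A⁻¹ * u ^ (-n)) := by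
    rw [Keta]
    exact setLIntegral_mono hmeas hbound
  have hint : IntegrableOn (fun u : ℝ => A⁻¹ * u ^ (-n)) (Set.Ioi a) :=
    (integrableOn_Ioi_rpow_of_lt (by linarith) hapos).const_mul _
  have hnn : 0 ≤ᵐ[volume.restrict (Set.Ioi a)] fun u : ℝ => A⁻¹ * u ^ (-n) :=
    (ae_restrict_iff' measurableSet_Ioi).2 (Filter.Eventually.of_forall fun x hx =>
      mul_nonneg (inv_nonneg.2 hApos.le)
        (Real.rpow_nonneg (le_of_lt (lt_trans hapos hx)) _))
  have step2 : ∫⁻ u in Set.Ici a, ENNReal.ofReal (A⁻¹ * u ^ (-n))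
      = ENNReal.ofReal (∫ u in Set.Ioi a, A⁻¹ * u ^ (-n)) := by
    rw [← setLIntegral_congr MeasureTheory.Ioi_ae_eq_Ici,
      ← ofReal_integral_eq_lintegral_ofReal hint hnn]
  have hval : ∫ u in Set.Ioi a, A⁻¹ * u ^ (-n) = A⁻¹ * (-a ^ (-n + 1) / (-n + 1)) := by
    rw [integral_const_mul, integral_Ioi_rpow_of_lt (by linarith) hapos]
  have hfinal : A⁻¹ * (-a ^ (-n + 1) / (-n + 1))
      = A⁻¹ * Real.pi ^ (1 - n) / (n - 1) * τ ^ (1 - n) := by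
    rw [show -n + 1 = 1 - n from by ring, ha,
      Real.mul_rpow Real.pi_pos.le hτpos.le]
    generalize Real.pi ^ (1 - n) = P
    generalize τ ^ (1 - n) = T
    rw [show (1 - n : ℝ) = -(n - 1) from by ring, div_neg, neg_div, neg_neg]
    ring
  calc Keta η τ ≤ ∫⁻ u in Set.Ici a, ENNReal.ofReal (A⁻¹ * u ^ (-n)) := step1
    _ = ENNReal.ofReal (∫ u in Set.Ioi a, A⁻¹ * u ^ (-n)) := step2
    _ = ENNReal.ofReal (A⁻¹ * Real.pi ^ (1 - n) / (n - 1) * τ ^ (1 - n)) := by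
        rw [hval, hfinal]
end

section
/- Let n > 1 be real and let η : (−∞,0] → (0,∞) be continuous. Assume there are constants c > 0 and k₀ ≥ 1 such that η(−k) ≥ c·k^n for all k ≥ k₀. Then there exist constants c' > 0 and u₀ > 0 such that inf_{k ≥ 0} (1 + e^{u−k})·η(−k) ≥ c'·u^n for all u ≥ u₀. (Polynomial analogue of the key intermediate estimate in the proof of Lemma 6.) -/
theorem inf_lower_bound_poly (n : ℝ) (hn : 1 < n)
    (η : ℝ → ℝ) (hη_cont : ContinuousOn η (Set.Iic 0))
    (hη_pos : ∀ x ≤ (0 : ℝ), 0 < η x)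
    (c : ℝ) (hc : 0 < c) (k₀ : ℝ) (hk₀ : 1 ≤ k₀)
    (hη_gr : ∀ k ≥ k₀, c * k ^ n ≤ η (-k)) :
    ∃ c' > (0 : ℝ), ∃ u₀ > (0 : ℝ), ∀ u ≥ u₀,
      c' * u ^ n ≤
        ⨅ k : {k : ℝ // 0 ≤ k}, (1 + Real.exp (u - k.1)) * η (-k.1) := by
  -- minimum of η on [-k₀, 0]
  have hcpt : IsCompact (Set.Icc (-k₀) (0:ℝ)) := isCompact_Icc
  have hsub : Set.Icc (-k₀) (0:ℝ) ⊆ Set.Iic 0 := fun x hx => hx.2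
  have hne : (Set.Icc (-k₀) (0:ℝ)).Nonempty := ⟨0, by constructor <;> nlinarith⟩
  obtain ⟨x₀, hx₀, hmin⟩ := hcpt.exists_isMinOn hne (hη_cont.mono hsub)
  set m := η x₀ with hm
  have hmpos : 0 < m := hη_pos x₀ (hx₀.2)
  set c' := c / 2 ^ n with hc'
  have h2n : (0:ℝ) < 2 ^ n := Real.rpow_pos_of_pos (by norm_num) n
  have hc'pos : 0 < c' := div_pos hc h2n
  -- find u₀: exp(u/2)/u^n large enough
  have htend := tendsto_exp_mul_div_rpow_atTop n (1/2) (by norm_num)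
  have hev := htend.eventually_ge_atTop (max (c' / m) (c' / c))
  obtain ⟨u₁, hu₁⟩ := (hev.and (Filter.eventually_ge_atTop (max 1 (2 * k₀)))).exists_forall_of_atTop
  refine ⟨c', hc'pos, max u₁ (max 1 (2 * k₀)), lt_of_lt_of_le one_pos (le_trans (le_max_left _ _) (le_max_right _ _)), ?_⟩
  intro u hu
  have hu1 : 1 ≤ u := le_trans (le_max_left _ _) (le_trans (le_max_right _ _) hu)
  have hu0 : 0 < u := lt_of_lt_of_le one_pos hu1
  have hu2k : 2 * k₀ ≤ u := le_trans (le_max_right _ _) (le_trans (le_max_right _ _) hu)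
  obtain ⟨hdiv, _⟩ := hu₁ u (le_trans (le_max_left _ _) hu)
  have hupow : 0 < u ^ n := Real.rpow_pos_of_pos hu0 n
  -- key: exp(u/2) ≥ max (c'/m) c' * u^n
  have hexp : max (c' / m) (c' / c) * u ^ n ≤ Real.exp ((1/2) * u) := by
    calc max (c' / m) (c' / c) * u ^ n ≤ (Real.exp ((1/2) * u) / u ^ n) * u ^ n := by
          apply mul_le_mul_of_nonneg_right hdiv (le_of_lt hupow)
      _ = Real.exp ((1/2) * u) := div_mul_cancel₀ _ (ne_of_gt hupow)
  have hexpA : c' / m * u ^ n ≤ Real.exp ((1/2) * u) :=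
    le_trans (mul_le_mul_of_nonneg_right (le_max_left _ _) (le_of_lt hupow)) hexp
  have hexpB : c' / c * u ^ n ≤ Real.exp ((1/2) * u) :=
    le_trans (mul_le_mul_of_nonneg_right (le_max_right _ _) (le_of_lt hupow)) hexp
  apply le_ciInf
  rintro ⟨k, hk⟩
  dsimp only
  have hηk : 0 < η (-k) := hη_pos _ (by linarith)
  by_cases hkk₀ : k ≤ k₀
  · -- k ≤ k₀ : use minimum m and exp(u-k) ≥ exp(u - k₀) ≥ exp(u/2)
    have hmle : m ≤ η (-k) := hmin ⟨by linarith, by linarith⟩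
    have he : Real.exp ((1/2) * u) ≤ Real.exp (u - k) := by
      apply Real.exp_le_exp.mpr; linarith
    calc c' * u ^ n = (c' / m * u ^ n) * m := by field_simp
      _ ≤ Real.exp ((1/2) * u) * m := mul_le_mul_of_nonneg_right hexpA hmpos.le
      _ ≤ Real.exp (u - k) * η (-k) :=
          mul_le_mul he hmle hmpos.le (Real.exp_pos _).le
      _ ≤ (1 + Real.exp (u - k)) * η (-k) := by nlinarith [Real.exp_pos (u - k)]
  · push_neg at hkk₀
    have hηk' : c * k ^ n ≤ η (-k) := hη_gr k hkk₀.le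
    have hk0 : 0 < k := lt_of_lt_of_le (by linarith) hkk₀.le
    by_cases hku : k ≤ u / 2
    · -- k₀ < k ≤ u/2: factor exp(u-k) ≥ exp(u/2), k^n ≥ 1
      have hkn1 : (1:ℝ) ≤ k ^ n := Real.one_le_rpow (by linarith) (by linarith)
      have he : Real.exp ((1/2) * u) ≤ Real.exp (u - k) := by
        apply Real.exp_le_exp.mpr; linarith
      calc c' * u ^ n = (c' / c * u ^ n) * c := by field_simp
        _ ≤ Real.exp ((1/2) * u) * c := mul_le_mul_of_nonneg_right hexpB hc.le
        _ = Real.exp ((1/2) * u) * (c * 1) := by ring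
        _ ≤ Real.exp (u - k) * (c * k ^ n) :=
            mul_le_mul he (mul_le_mul_of_nonneg_left hkn1 hc.le) (by positivity)
              (Real.exp_pos _).le
        _ ≤ Real.exp (u - k) * η (-k) :=
            mul_le_mul_of_nonneg_left hηk' (Real.exp_pos _).le
        _ ≤ (1 + Real.exp (u - k)) * η (-k) := by nlinarith [Real.exp_pos (u - k)]
    · -- k ≥ u/2: c k^n ≥ c (u/2)^n = c' u^n
      push_neg at hku
      have h1 : (u / 2) ^ n ≤ k ^ n :=
        Real.rpow_le_rpow (by linarith) hku.le (by linarith)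
      have h2 : (u / 2) ^ n = u ^ n / 2 ^ n := Real.div_rpow hu0.le (by norm_num : (0:ℝ) ≤ 2) n
      calc c' * u ^ n = c * (u / 2) ^ n := by rw [h2, hc']; ring
        _ ≤ c * k ^ n := mul_le_mul_of_nonneg_left h1 hc.le
        _ ≤ η (-k) := hηk'
        _ ≤ (1 + Real.exp (u - k)) * η (-k) := by nlinarith [Real.exp_pos (u - k)]
end

section
/- Let c₁ ≥ 0 and T > c₁, let k ∈ ℝ, and let G : ℂ → ℂ be continuous on the closed upper half-plane {z : Im z ≥ 0} and analytic on the open upper half-plane {z : Im z > 0}. Assume there is an integrable function φ : ℝ → [0,∞) with φ(x) → 0 as |x| → ∞ such that |G(z)| ≤ φ(Re z)·e^{c₁·Im z} for all z with Im z ≥ 0. Then the function p ↦ G(p)·e^{ipT}·(1 + e^{k−p})^{−1} is integrable on ℝ, the series ∑_{n=0}^∞ G(k + 2πi(n + 1/2))·e^{−2π(n+1/2)T} converges absolutely, and ∫_ℝ G(p)·e^{ipT}·(1 + e^{k−p})^{−1} dp = 2πi·e^{ikT}·∑_{n=0}^∞ G(k + 2πi(n + 1/2))·e^{−2π(n+1/2)T}.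 (Contour-closing/residue computation used in the proof of Lemma 1: the poles of (1 + e^{k−p})^{−1} in the upper half-plane lie at p = k + 2πi(n + 1/2), n = 0, 1, 2, …, each with residue 1.) -/
open MeasureTheory Filter

open Complex Set Topology


lemma log_neg_of_im_pos {u : ℂ} (hu : 0 < u.im) : Complex.log (-u) = Complex.log u - Real.pi * I := by
  apply Complex.ext
  · simp [Complex.log_re, map_neg_eq_map]
  · simp [Complex.log_im, Complex.arg_neg_eq_arg_sub_pi_of_im_pos hu]

lemma log_neg_of_im_neg {u : ℂ} (hu : u.im < 0) : Complex.log (-u) = Complex.log u + Real.pi * I := by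
  apply Complex.ext
  · simp [Complex.log_re, map_neg_eq_map]
  · simp [Complex.log_im, Complex.arg_neg_eq_arg_add_pi_of_im_neg hu]

lemma horiz_inv_integral (a b y : ℝ) (z₀ : ℂ) (hy : y ≠ z₀.im) :
    (∫ x : ℝ in a..b, ((x : ℂ) + y * I - z₀)⁻¹) =
      Complex.log ((b : ℂ) + y * I - z₀) - Complex.log ((a : ℂ) + y * I - z₀) := by
  have him : ∀ x : ℝ, ((x : ℂ) + y * I - z₀).im = y - z₀.im := by intro x; simp
  apply intervalIntegral.integral_eq_sub_of_hasDerivAt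
  · intro x _
    have hg : HasDerivAt (fun x : ℝ => (x : ℂ) + y * I - z₀) 1 x := by
      simpa [add_sub_assoc] using
        (Complex.ofRealCLM.hasDerivAt (x := x)).add_const ((y : ℂ) * I - z₀)
    have hmem : ((x : ℂ) + y * I - z₀) ∈ Complex.slitPlane := by
      rw [Complex.mem_slitPlane_iff]
      right; rw [him]; exact sub_ne_zero.mpr hy
    simpa using hg.clog_real hmem
  · apply ContinuousOn.intervalIntegrable
    apply ContinuousOn.inv₀
    · fun_prop
    · intro x _ h0
      have := congrArg Complex.im h0
      rw [him] at this; simp at this; exact hy (by linarith)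
lemma vert_right_inv_integral (c e x : ℝ) (z₀ : ℂ) (hx : z₀.re < x) :
    I • (∫ y : ℝ in c..e, ((x : ℂ) + y * I - z₀)⁻¹) =
      Complex.log ((x : ℂ) + e * I - z₀) - Complex.log ((x : ℂ) + c * I - z₀) := by
  have hre : ∀ y : ℝ, ((x : ℂ) + y * I - z₀).re = x - z₀.re := by intro y; simp
  have hne : ∀ y : ℝ, ((x : ℂ) + y * I - z₀) ≠ 0 := by
    intro y h0
    have := congrArg Complex.re h0
    rw [hre] at this; simp at this; linarith
  rw [smul_eq_mul, ← intervalIntegral.integral_const_mul]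
  apply intervalIntegral.integral_eq_sub_of_hasDerivAt
  · intro y _
    have hg : HasDerivAt (fun y : ℝ => (x : ℂ) + y * I - z₀) I y := by
      have h1 : HasDerivAt (fun y : ℝ => (y : ℂ) * I) I y := by
        simpa using (Complex.ofRealCLM.hasDerivAt (x := y)).mul_const I
      have heq : (fun y : ℝ => (x : ℂ) + y * I - z₀) = fun y : ℝ => (y : ℂ) * I + ((x : ℂ) - z₀) := by
        funext y; ring
      rw [heq]; exact h1.add_const _
    have hmem : ((x : ℂ) + y * I - z₀) ∈ Complex.slitPlane := by
      rw [Complex.mem_slitPlane_iff]; left; rw [hre]; linarith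
    have := hg.clog_real hmem
    simpa [div_eq_mul_inv, mul_comm] using this
  · apply ContinuousOn.intervalIntegrable
    apply ContinuousOn.mul continuousOn_const
    apply ContinuousOn.inv₀
    · fun_prop
    · intro y _; exact hne y
lemma vert_left_inv_integral (c e x : ℝ) (z₀ : ℂ) (hx : x < z₀.re) :
    I • (∫ y : ℝ in c..e, ((x : ℂ) + y * I - z₀)⁻¹) =
      Complex.log (-((x : ℂ) + e * I - z₀)) - Complex.log (-((x : ℂ) + c * I - z₀)) := by
  have hre : ∀ y : ℝ, ((x : ℂ) + y * I - z₀).re = x - z₀.re := by intro y; simp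
  have hne : ∀ y : ℝ, ((x : ℂ) + y * I - z₀) ≠ 0 := by
    intro y h0
    have := congrArg Complex.re h0
    rw [hre] at this; simp at this; linarith
  rw [smul_eq_mul, ← intervalIntegral.integral_const_mul]
  apply intervalIntegral.integral_eq_sub_of_hasDerivAt
  · intro y _
    have hg : HasDerivAt (fun y : ℝ => -((x : ℂ) + y * I - z₀)) (-I) y := by
      have h1 : HasDerivAt (fun y : ℝ => (y : ℂ) * I) I y := by
        simpa using (Complex.ofRealCLM.hasDerivAt (x := y)).mul_const I
      have heq : (fun y : ℝ => -((x : ℂ) + y * I - z₀)) = fun y : ℝ => -((y : ℂ) * I + ((x : ℂ) - z₀)) := by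
        funext y; ring
      rw [heq]; exact (h1.add_const _).neg
    have hmem : (-((x : ℂ) + y * I - z₀)) ∈ Complex.slitPlane := by
      rw [Complex.mem_slitPlane_iff]; left; simp [hre]; linarith
    have := hg.clog_real hmem
    have hval : -I / -((x : ℂ) + y * I - z₀) = I * ((x : ℂ) + y * I - z₀)⁻¹ := by
      rw [neg_div_neg_eq, div_eq_mul_inv]
    rw [hval] at this
    exact this
  · apply ContinuousOn.intervalIntegrable
    apply ContinuousOn.mul continuousOn_const
    apply ContinuousOn.inv₀
    · fun_prop
    · intro y _; exact hne y

lemma rect_inv_integral (a b c e : ℝ) (z₀ : ℂ)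
    (h1 : a < z₀.re) (h2 : z₀.re < b) (h3 : c < z₀.im) (h4 : z₀.im < e) :
    (∫ x : ℝ in a..b, ((x : ℂ) + c * I - z₀)⁻¹) -
      (∫ x : ℝ in a..b, ((x : ℂ) + e * I - z₀)⁻¹) +
      I • (∫ y : ℝ in c..e, ((b : ℂ) + y * I - z₀)⁻¹) -
      I • (∫ y : ℝ in c..e, ((a : ℂ) + y * I - z₀)⁻¹) =
      2 * Real.pi * I := by
  rw [horiz_inv_integral a b c z₀ (ne_of_lt h3),
      horiz_inv_integral a b e z₀ (ne_of_gt h4),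
      vert_right_inv_integral c e b z₀ h2,
      vert_left_inv_integral c e a z₀ h1]
  have himt : (0:ℝ) < ((a : ℂ) + e * I - z₀).im := by simp; linarith
  have himb : ((a : ℂ) + c * I - z₀).im < 0 := by simp; linarith
  rw [log_neg_of_im_pos himt, log_neg_of_im_neg himb]
  ring

noncomputable def zm (k : ℝ) (m : ℕ) : ℂ := (k : ℂ) + (2 * m + 1) * Real.pi * I

lemma zm_re (k : ℝ) (m : ℕ) : (zm k m).re = k := by simp [zm]
lemma zm_im (k : ℝ) (m : ℕ) : (zm k m).im = (2 * m + 1) * Real.pi := by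
  simp [zm]

lemma q_zero (k : ℝ) (m : ℕ) : 1 + Complex.exp ((k : ℂ) - zm k m) = 0 := by
  have h : (k : ℂ) - zm k m = Real.pi * I + ((-(m : ℤ) - 1 : ℤ) : ℂ) * (2 * Real.pi * I) := by
    simp [zm]; push_cast; ring
  rw [h, Complex.exp_add, Complex.exp_int_mul_two_pi_mul_I, Complex.exp_pi_mul_I]
  ring

lemma q_ne_zero (k : ℝ) (m : ℕ) (p : ℂ) (hp1 : 2 * Real.pi * m ≤ p.im)
    (hp2 : p.im ≤ 2 * Real.pi * (m + 1)) (hne : p ≠ zm k m) :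
    1 + Complex.exp ((k : ℂ) - p) ≠ 0 := by
  intro h0
  have hexp : Complex.exp ((k : ℂ) - p) = Complex.exp (Real.pi * I) := by
    rw [Complex.exp_pi_mul_I]; linear_combination h0
  rw [Complex.exp_eq_exp_iff_exists_int] at hexp
  obtain ⟨n, hn⟩ := hexp
  have him := congrArg Complex.im hn
  simp [sub_im] at him
  -- him : -p.im = π + n * (2π)  (hopefully)
  have hπ := Real.pi_pos
  have h1 : (n : ℝ) < -(m : ℝ) := by nlinarith [him]
  have h2 : (-(m : ℝ) - 2) < n := by nlinarith [him]
  have hn1 : n < -(m : ℤ) := by exact_mod_cast h1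
  have hn2 : -(m : ℤ) - 2 < n := by exact_mod_cast h2
  have hnval : n = -(m : ℤ) - 1 := by omega
  apply hne
  have : p = (k : ℂ) - (Real.pi * I + n * (2 * Real.pi * I)) := by linear_combination -hn
  rw [this, hnval, zm]
  push_cast
  ring

lemma goursat_coords (f : ℂ → ℂ) (a b c e : ℝ) (hab : a ≤ b) (hce : c ≤ e) (s : Set ℂ)
    (hs : s.Countable)
    (Hc : ContinuousOn f {p : ℂ | p.re ∈ Icc a b ∧ p.im ∈ Icc c e})
    (Hd : ∀ p : ℂ, p.re ∈ Ioo a b → p.im ∈ Ioo c e → p ∉ s → DifferentiableAt ℂ f p) :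
    (∫ x : ℝ in a..b, f (x + c * I)) - (∫ x : ℝ in a..b, f (x + e * I)) +
      I • (∫ y : ℝ in c..e, f (b + y * I)) - I • (∫ y : ℝ in c..e, f (a + y * I)) = 0 := by
  have hz : ((a : ℂ) + (c : ℂ) * I).re = a := by simp
  have hw : ((b : ℂ) + (e : ℂ) * I).re = b := by simp
  have hzi : ((a : ℂ) + (c : ℂ) * I).im = c := by simp
  have hwi : ((b : ℂ) + (e : ℂ) * I).im = e := by simp
  have := Complex.integral_boundary_rect_eq_zero_of_differentiable_on_off_countable f
    ((a : ℂ) + (c : ℂ) * I) ((b : ℂ) + (e : ℂ) * I) s hs ?_ ?_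
  · rw [hz, hw, hzi, hwi] at this
    exact this
  · rw [hz, hw, hzi, hwi]
    have hset : (Set.uIcc a b) ×ℂ (Set.uIcc c e) = {p : ℂ | p.re ∈ Icc a b ∧ p.im ∈ Icc c e} := by
      ext p
      simp [Complex.mem_reProdIm, uIcc_of_le hab, uIcc_of_le hce]
    rw [hset]; exact Hc
  · rw [hz, hw, hzi, hwi]
    intro p hp
    simp only [min_eq_left hab, max_eq_right hab, min_eq_left hce, max_eq_right hce,
      mem_diff, Complex.mem_reProdIm] at hp
    exact Hd p hp.1.1 hp.1.2 hp.2

lemma side_decomp {f h inv : ℝ → ℂ} {r : ℂ} {a b : ℝ}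
    (hcong : ∀ x ∈ uIcc a b, f x = h x + r * inv x)
    (hh : IntervalIntegrable h volume a b) (hi : IntervalIntegrable inv volume a b) :
    ∫ x in a..b, f x = (∫ x in a..b, h x) + r * ∫ x in a..b, inv x := by
  rw [intervalIntegral.integral_congr hcong,
    intervalIntegral.integral_add hh (hi.const_mul r), intervalIntegral.integral_const_mul]

section
variable (T k : ℝ) (G : ℂ → ℂ)

lemma rect_residue
    (hG_cont : ContinuousOn G {z : ℂ | 0 ≤ z.im})
    (hG_diff : DifferentiableOn ℂ G {z : ℂ | 0 < z.im})
    (m : ℕ) (R : ℝ) (hR : |k| + 1 ≤ R) :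
    (∫ x : ℝ in (-R)..R,
        G (x + (2 * Real.pi * m) * I) * Complex.exp (I * ((x : ℂ) + (2 * Real.pi * m) * I) * T) *
          (1 + Complex.exp ((k : ℂ) - ((x : ℂ) + (2 * Real.pi * m) * I)))⁻¹) -
      (∫ x : ℝ in (-R)..R,
        G (x + (2 * Real.pi * (m + 1)) * I) *
          Complex.exp (I * ((x : ℂ) + (2 * Real.pi * (m + 1)) * I) * T) *
          (1 + Complex.exp ((k : ℂ) - ((x : ℂ) + (2 * Real.pi * (m + 1)) * I)))⁻¹) +
      I • (∫ y : ℝ in (2 * Real.pi * m)..(2 * Real.pi * (m + 1)),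
        G ((R : ℂ) + y * I) * Complex.exp (I * ((R : ℂ) + (y : ℂ) * I) * T) *
          (1 + Complex.exp ((k : ℂ) - ((R : ℂ) + (y : ℂ) * I)))⁻¹) -
      I • (∫ y : ℝ in (2 * Real.pi * m)..(2 * Real.pi * (m + 1)),
        G ((-R : ℝ) + y * I) * Complex.exp (I * (((-R : ℝ) : ℂ) + (y : ℂ) * I) * T) *
          (1 + Complex.exp ((k : ℂ) - (((-R : ℝ) : ℂ) + (y : ℂ) * I)))⁻¹) =
      2 * Real.pi * I * (G (zm k m) * Complex.exp (I * (zm k m) * T)) := by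
  have hπ := Real.pi_pos
  set f : ℂ → ℂ := fun p => G p * Complex.exp (I * p * T) * (1 + Complex.exp ((k : ℂ) - p))⁻¹
    with hf_def
  set c : ℝ := 2 * Real.pi * m with hc_def
  set e : ℝ := 2 * Real.pi * (m + 1) with he_def
  set z₀ : ℂ := zm k m with hz₀_def
  have hz₀re : z₀.re = k := zm_re k m
  have hz₀im : z₀.im = (2 * m + 1) * Real.pi := zm_im k m
  have hc_nonneg : 0 ≤ c := by positivity
  have hce : c ≤ e := by nlinarith
  have hcz : c < z₀.im := by rw [hz₀im]; nlinarith
  have hze : z₀.im < e := by rw [hz₀im]; nlinarith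
  have hRR : -R ≤ R := by have := abs_nonneg k; linarith
  have haz : -R < z₀.re := by rw [hz₀re]; have := neg_abs_le k; linarith
  have hzb : z₀.re < R := by rw [hz₀re]; have := le_abs_self k; linarith
  set q : ℂ → ℂ := fun p => 1 + Complex.exp ((k : ℂ) - p) with hq_def
  have hq_diff : Differentiable ℂ q := by
    apply Differentiable.const_add
    exact (Complex.differentiable_exp.comp ((differentiable_const _).sub differentiable_id))
  have hq0 : q z₀ = 0 := q_zero k m
  set d : ℂ → ℂ := dslope q z₀ with hd_def
  have hd_diff : Differentiable ℂ d := by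
    rw [← differentiableOn_univ]
    exact (Complex.differentiableOn_dslope (by simp : (univ : Set ℂ) ∈ nhds z₀)).mpr
      hq_diff.differentiableOn
  have hexpz₀ : Complex.exp ((k : ℂ) - z₀) = -1 := by
    have := q_zero k m; rw [← hz₀_def] at this; linear_combination this
  have hd_z₀ : d z₀ = 1 := by
    rw [hd_def, dslope_same]
    have hq' : HasDerivAt q 1 z₀ := by
      have h1 : HasDerivAt (fun p : ℂ => (k : ℂ) - p) (-1) z₀ := by
        simpa using (hasDerivAt_id z₀).const_sub (k : ℂ)
      have h2 := h1.cexp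
      rw [hexpz₀] at h2
      have h3 := h2.const_add (1 : ℂ)
      simpa [hq_def] using h3
    exact hq'.deriv
  have hqd : ∀ p : ℂ, q p = (p - z₀) * d p := by
    intro p
    have := sub_smul_dslope q z₀ p
    rw [hq0, sub_zero, smul_eq_mul] at this
    rw [← this, ← hd_def]
  set S : Set ℂ := {p : ℂ | p.im ∈ Icc c e} with hS_def
  have hd_ne : ∀ p ∈ S, d p ≠ 0 := by
    intro p hp
    by_cases hpz : p = z₀
    · rw [hpz, hd_z₀]; exact one_ne_zero
    · have hqne : q p ≠ 0 := q_ne_zero k m p hp.1 (by simpa [he_def, mul_add] using hp.2) hpz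
      intro hd0
      apply hqne
      rw [hqd p, hd0, mul_zero]
  set A : ℂ → ℂ := fun p => G p * Complex.exp (I * p * T) * (d p)⁻¹ with hA_def
  have hS_up : S ⊆ {z : ℂ | 0 ≤ z.im} := fun p hp => le_trans hc_nonneg hp.1
  have hA_cont : ContinuousOn A S := by
    apply ContinuousOn.mul
    · exact (hG_cont.mono hS_up).mul (Continuous.continuousOn (by fun_prop))
    · exact (hd_diff.continuous.continuousOn).inv₀ hd_ne
  set O : Set ℂ := Complex.im ⁻¹' (Ioo c e) with hO_def
  have hO_open : IsOpen O := isOpen_Ioo.preimage Complex.continuous_im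
  have hO_S : O ⊆ S := fun p hp => ⟨le_of_lt hp.1, le_of_lt hp.2⟩
  have hO_up : O ⊆ {z : ℂ | 0 < z.im} := fun p hp => lt_of_le_of_lt hc_nonneg hp.1
  have hA_diffO : DifferentiableOn ℂ A O := by
    apply DifferentiableOn.mul
    · exact (hG_diff.mono hO_up).mul (Differentiable.differentiableOn (by fun_prop))
    · exact (hd_diff.differentiableOn).inv (fun p hp => hd_ne p (hO_S hp))
  have hz₀O : z₀ ∈ O := ⟨hcz, hze⟩
  have hA_at : DifferentiableAt ℂ A z₀ := hA_diffO.differentiableAt (hO_open.mem_nhds hz₀O)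
  set res : ℂ := A z₀ with hres_def
  have hres : res = G z₀ * Complex.exp (I * z₀ * T) := by
    rw [hres_def, hA_def]; simp [hd_z₀]
  set h : ℂ → ℂ := dslope A z₀ with hh_def
  have hkey : ∀ p ∈ S, p ≠ z₀ → f p = h p + res * (p - z₀)⁻¹ := by
    intro p hp hpz
    have hsub : p - z₀ ≠ 0 := sub_ne_zero.mpr hpz
    have hdp : d p ≠ 0 := hd_ne p hp
    rw [hh_def, dslope_of_ne A hpz, slope_def_field, hres_def]
    have hstep : (A p - A z₀) / (p - z₀) + A z₀ * (p - z₀)⁻¹ = A p * (p - z₀)⁻¹ := by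
      field_simp
      ring
    rw [hstep, hf_def, hA_def]
    simp only
    rw [show (1 + Complex.exp ((k:ℂ) - p)) = q p from rfl, hqd p, mul_inv]
    ring
  set rectset : Set ℂ := {p : ℂ | p.re ∈ Icc (-R) R ∧ p.im ∈ Icc c e} with hrect_def
  have hrect_S : rectset ⊆ S := fun p hp => hp.2
  have hh_cont : ContinuousOn h rectset := by
    intro b hb
    by_cases hbz : b = z₀
    · rw [hbz]
      exact ((continuousAt_dslope_same.mpr hA_at).continuousWithinAt)
    · exact (continuousWithinAt_dslope_of_ne hbz).mpr
        ((hA_cont b (hrect_S hb)).mono hrect_S)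
  have hh_goursat :
      (∫ x : ℝ in (-R)..R, h (x + c * I)) - (∫ x : ℝ in (-R)..R, h (x + e * I)) +
        I • (∫ y : ℝ in c..e, h (R + y * I)) - I • (∫ y : ℝ in c..e, h ((-R : ℝ) + y * I)) = 0 := by
    apply goursat_coords h (-R) R c e hRR hce {z₀} (countable_singleton z₀) hh_cont
    intro p hp1 hp2 hp3
    have hpz : p ≠ z₀ := by simpa using hp3
    exact (differentiableAt_dslope_of_ne hpz).mpr
      (hA_diffO.differentiableAt (hO_open.mem_nhds hp2))
  have hinv_rect := rect_inv_integral (-R) R c e z₀ haz hzb hcz hze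
  -- side decompositions
  have hmem_bot : ∀ x : ℝ, x ∈ uIcc (-R) R → ((x : ℂ) + c * I) ∈ S ∧ ((x : ℂ) + c * I) ≠ z₀ := by
    intro x _
    constructor
    · simp [hS_def, hce]
    · intro hcon
      have := congrArg Complex.im hcon
      simp [hz₀im] at this
      nlinarith
  have hmem_top : ∀ x : ℝ, x ∈ uIcc (-R) R → ((x : ℂ) + e * I) ∈ S ∧ ((x : ℂ) + e * I) ≠ z₀ := by
    intro x _
    constructor
    · simp [hS_def, hce]
    · intro hcon
      have := congrArg Complex.im hcon
      simp [hz₀im, he_def] at this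
      nlinarith
  have hmem_vert : ∀ (u : ℝ), u ≠ k → ∀ y : ℝ, y ∈ uIcc c e →
      ((u : ℂ) + y * I) ∈ S ∧ ((u : ℂ) + y * I) ≠ z₀ := by
    intro u hu y hy
    rw [uIcc_of_le hce] at hy
    constructor
    · simpa [hS_def] using hy
    · intro hcon
      have := congrArg Complex.re hcon
      simp [hz₀re] at this
      exact hu this
  have hside_h : ∀ (y0 : ℝ), ContinuousOn (fun x : ℝ => h ((x : ℂ) + y0 * I)) (uIcc (-R) R) →
      True := fun _ _ => trivial
  -- integrability of h on sides
  have hmapsTo_bot : ∀ y0 : ℝ, y0 ∈ Icc c e → MapsTo (fun x : ℝ => (x : ℂ) + y0 * I)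
      (uIcc (-R) R) rectset := by
    intro y0 hy0 x hx
    rw [uIcc_of_le hRR] at hx
    constructor <;> simp [hx.1, hx.2, hy0.1, hy0.2]
  have hh_int_bot : ∀ y0 : ℝ, y0 ∈ Icc c e →
      IntervalIntegrable (fun x : ℝ => h ((x : ℂ) + y0 * I)) volume (-R) R := by
    intro y0 hy0
    apply ContinuousOn.intervalIntegrable
    exact hh_cont.comp (Continuous.continuousOn (by fun_prop)) (hmapsTo_bot y0 hy0)
  have hmapsTo_vert : ∀ u : ℝ, u ∈ Icc (-R) R → MapsTo (fun y : ℝ => (u : ℂ) + y * I)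
      (uIcc c e) rectset := by
    intro u hu y hy
    rw [uIcc_of_le hce] at hy
    constructor <;> simp [hy.1, hy.2, hu.1, hu.2]
  have hh_int_vert : ∀ u : ℝ, u ∈ Icc (-R) R →
      IntervalIntegrable (fun y : ℝ => h ((u : ℂ) + y * I)) volume c e := by
    intro u hu
    apply ContinuousOn.intervalIntegrable
    exact hh_cont.comp (Continuous.continuousOn (by fun_prop)) (hmapsTo_vert u hu)
  -- integrability of inv on sides
  have hinv_int_horiz : ∀ y0 : ℝ, y0 ≠ z₀.im →
      IntervalIntegrable (fun x : ℝ => ((x : ℂ) + y0 * I - z₀)⁻¹) volume (-R) R := by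
    intro y0 hy0
    apply ContinuousOn.intervalIntegrable
    apply ContinuousOn.inv₀
    · fun_prop
    · intro x _ h0
      have := congrArg Complex.im h0
      simp at this
      exact hy0 (by linarith)
  have hinv_int_vert : ∀ u : ℝ, u ≠ z₀.re →
      IntervalIntegrable (fun y : ℝ => ((u : ℂ) + y * I - z₀)⁻¹) volume c e := by
    intro u hu
    apply ContinuousOn.intervalIntegrable
    apply ContinuousOn.inv₀
    · fun_prop
    · intro y _ h0
      have := congrArg Complex.re h0
      simp at this
      exact hu (by linarith)
  have hcE : c ∈ Icc c e := ⟨le_refl c, hce⟩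
  have heE : e ∈ Icc c e := ⟨hce, le_refl e⟩
  have hbot_eq : (∫ x : ℝ in (-R)..R, f ((x : ℂ) + c * I)) =
      (∫ x : ℝ in (-R)..R, h ((x : ℂ) + c * I)) +
        res * ∫ x : ℝ in (-R)..R, ((x : ℂ) + c * I - z₀)⁻¹ := by
    apply side_decomp
    · intro x hx
      obtain ⟨hm, hne⟩ := hmem_bot x hx
      exact hkey _ hm hne
    · exact hh_int_bot c hcE
    · exact hinv_int_horiz c (ne_of_lt hcz)
  have htop_eq : (∫ x : ℝ in (-R)..R, f ((x : ℂ) + e * I)) =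
      (∫ x : ℝ in (-R)..R, h ((x : ℂ) + e * I)) +
        res * ∫ x : ℝ in (-R)..R, ((x : ℂ) + e * I - z₀)⁻¹ := by
    apply side_decomp
    · intro x hx
      obtain ⟨hm, hne⟩ := hmem_top x hx
      exact hkey _ hm hne
    · exact hh_int_bot e heE
    · exact hinv_int_horiz e (ne_of_gt hze)
  have hright_eq : (∫ y : ℝ in c..e, f ((R : ℂ) + y * I)) =
      (∫ y : ℝ in c..e, h ((R : ℂ) + y * I)) +
        res * ∫ y : ℝ in c..e, ((R : ℂ) + y * I - z₀)⁻¹ := by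
    apply side_decomp
    · intro y hy
      obtain ⟨hm, hne⟩ := hmem_vert R (by rw [hz₀re] at hzb; exact ne_of_gt hzb) y hy
      exact hkey _ hm hne
    · exact hh_int_vert R ⟨hRR, le_refl R⟩
    · exact hinv_int_vert R (ne_of_gt hzb)
  have hleft_eq : (∫ y : ℝ in c..e, f (((-R : ℝ) : ℂ) + y * I)) =
      (∫ y : ℝ in c..e, h (((-R : ℝ) : ℂ) + y * I)) +
        res * ∫ y : ℝ in c..e, (((-R : ℝ) : ℂ) + y * I - z₀)⁻¹ := by
    apply side_decomp
    · intro y hy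
      obtain ⟨hm, hne⟩ := hmem_vert (-R) (by rw [hz₀re] at haz; exact ne_of_lt haz) y hy
      exact hkey _ hm hne
    · exact hh_int_vert (-R) ⟨le_refl (-R), hRR⟩
    · exact hinv_int_vert (-R) (ne_of_lt haz)
  -- assemble
  have hgoal : (∫ x : ℝ in (-R)..R, f ((x : ℂ) + c * I)) -
      (∫ x : ℝ in (-R)..R, f ((x : ℂ) + e * I)) +
      I • (∫ y : ℝ in c..e, f ((R : ℂ) + y * I)) -
      I • (∫ y : ℝ in c..e, f (((-R : ℝ) : ℂ) + y * I)) = 2 * Real.pi * I * res := by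
    rw [hbot_eq, htop_eq, hright_eq, hleft_eq]
    simp only [smul_eq_mul] at hh_goursat hinv_rect ⊢
    linear_combination hh_goursat + res * hinv_rect
  rw [hres] at hgoal
  simp only [hc_def, he_def] at hgoal
  push_cast at hgoal ⊢
  convert hgoal using 2
end

noncomputable def FFd (G : ℂ → ℂ) (T k : ℝ) : ℂ → ℂ :=
  fun p => G p * Complex.exp (I * p * (T : ℂ)) * (1 + Complex.exp ((k : ℂ) - p))⁻¹

lemma rect_residue' (T k : ℝ) (G : ℂ → ℂ)
    (hG_cont : ContinuousOn G {z : ℂ | 0 ≤ z.im})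
    (hG_diff : DifferentiableOn ℂ G {z : ℂ | 0 < z.im})
    (m : ℕ) (R : ℝ) (hR : |k| + 1 ≤ R) :
    (∫ x : ℝ in (-R)..R, FFd G T k ((x : ℂ) + (2 * Real.pi * m) * I)) -
      (∫ x : ℝ in (-R)..R, FFd G T k ((x : ℂ) + (2 * Real.pi * (m + 1)) * I)) +
      I • (∫ y : ℝ in (2 * Real.pi * m)..(2 * Real.pi * (m + 1)),
        FFd G T k ((R : ℂ) + y * I)) -
      I • (∫ y : ℝ in (2 * Real.pi * m)..(2 * Real.pi * (m + 1)),
        FFd G T k (((-R : ℝ) : ℂ) + y * I)) =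
      2 * Real.pi * I * (G (zm k m) * Complex.exp (I * (zm k m) * T)) :=
  rect_residue T k G hG_cont hG_diff m R hR

theorem residue_sum_formula (c₁ T : ℝ) (hc₁ : 0 ≤ c₁) (hT : c₁ < T) (k : ℝ)
    (G : ℂ → ℂ)
    (hG_cont : ContinuousOn G {z : ℂ | 0 ≤ z.im})
    (hG_diff : DifferentiableOn ℂ G {z : ℂ | 0 < z.im})
    (φ : ℝ → ℝ) (hφ_nonneg : ∀ x, 0 ≤ φ x) (hφ_int : Integrable φ)
    (hφ_decay : Tendsto φ (cocompact ℝ) (nhds 0))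
    (hG_bound : ∀ z : ℂ, 0 ≤ z.im → ‖G z‖ ≤ φ z.re * Real.exp (c₁ * z.im)) :
    Integrable (fun p : ℝ =>
        G (p : ℂ) * Complex.exp (Complex.I * (p : ℂ) * (T : ℂ)) *
          (1 + Complex.exp ((k : ℂ) - (p : ℂ)))⁻¹) ∧
    Summable (fun n : ℕ =>
        ‖(G ((k : ℂ) + 2 * Real.pi * Complex.I * ((n : ℂ) + 1 / 2)) *
          Complex.exp (-(2 * Real.pi * ((n : ℂ) + 1 / 2) * (T : ℂ))))‖) ∧
    (∫ p : ℝ, G (p : ℂ) * Complex.exp (Complex.I * (p : ℂ) * (T : ℂ)) *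
        (1 + Complex.exp ((k : ℂ) - (p : ℂ)))⁻¹) =
      2 * Real.pi * Complex.I * Complex.exp (Complex.I * (k : ℂ) * (T : ℂ)) *
        ∑' n : ℕ, G ((k : ℂ) + 2 * Real.pi * Complex.I * ((n : ℂ) + 1 / 2)) *
          Complex.exp (-(2 * Real.pi * ((n : ℂ) + 1 / 2) * (T : ℂ))) := by
  have hπ := Real.pi_pos
  have hT0 : 0 < T := lt_of_le_of_lt hc₁ hT
  -- basic norm facts
  have habs_exp : ∀ p : ℂ, ‖Complex.exp (I * p * (T : ℂ))‖ =
      Real.exp (-(T * p.im)) := by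
    intro p
    rw [Complex.norm_exp]
    congr 1
    simp [Complex.mul_re, Complex.mul_im]
    ring
  have hq_line : ∀ (m : ℕ) (x : ℝ), 1 + Complex.exp ((k : ℂ) - ((x : ℂ) + 2 * Real.pi * m * I)) =
      ((1 + Real.exp (k - x) : ℝ) : ℂ) := by
    intro m x
    have h1 : (k : ℂ) - ((x : ℂ) + 2 * Real.pi * m * I) =
        ((k - x : ℝ) : ℂ) + ((-(m : ℤ) : ℤ) : ℂ) * (2 * Real.pi * I) := by
      push_cast; ring
    rw [h1, Complex.exp_add, Complex.exp_int_mul_two_pi_mul_I, mul_one, ← Complex.ofReal_exp]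
    push_cast; ring
  have hq_line_pos : ∀ x : ℝ, (0:ℝ) < 1 + Real.exp (k - x) := by
    intro x; have := Real.exp_pos (k - x); linarith
  have habs_line : ∀ (m : ℕ) (x : ℝ),
      ‖FFd G T k ((x : ℂ) + 2 * Real.pi * m * I)‖ ≤
        φ x * Real.exp (2 * Real.pi * m * (c₁ - T)) := by
    intro m x
    have him : ((x : ℂ) + 2 * Real.pi * m * I).im = 2 * Real.pi * m := by simp
    have hre : ((x : ℂ) + 2 * Real.pi * m * I).re = x := by simp
    have hy0 : (0:ℝ) ≤ 2 * Real.pi * m := by positivity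
    rw [FFd, norm_mul, norm_mul, habs_exp, him, norm_inv, hq_line m x]
    have h1 : ‖G ((x : ℂ) + 2 * Real.pi * m * I)‖ ≤
        φ x * Real.exp (c₁ * (2 * Real.pi * m)) := by
      have := hG_bound ((x : ℂ) + 2 * Real.pi * m * I) (by rw [him]; exact hy0)
      rwa [him, hre] at this
    have h2 : (‖((1 + Real.exp (k - x) : ℝ) : ℂ)‖)⁻¹ ≤ 1 := by
      rw [Complex.norm_real, Real.norm_eq_abs, abs_of_pos (hq_line_pos x)]
      rw [inv_le_one_iff₀]
      right; linarith [Real.exp_pos (k - x)]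
    calc ‖G ((x : ℂ) + 2 * Real.pi * m * I)‖ * Real.exp (-(T * (2 * Real.pi * m))) *
          (‖((1 + Real.exp (k - x) : ℝ) : ℂ)‖)⁻¹
        ≤ (φ x * Real.exp (c₁ * (2 * Real.pi * m))) * Real.exp (-(T * (2 * Real.pi * m))) * 1 := by
          apply mul_le_mul
          · apply mul_le_mul_of_nonneg_right h1 (le_of_lt (Real.exp_pos _))
          · exact h2
          · positivity
          · exact mul_nonneg (mul_nonneg (hφ_nonneg x) (Real.exp_pos _).le) (Real.exp_pos _).le
      _ = φ x * Real.exp (2 * Real.pi * m * (c₁ - T)) := by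
          rw [mul_one, mul_assoc, ← Real.exp_add]
          congr 2
          ring
  have hline_cont : ∀ m : ℕ, Continuous (fun x : ℝ => FFd G T k ((x : ℂ) + 2 * Real.pi * m * I)) := by
    intro m
    have hy0 : (0:ℝ) ≤ 2 * Real.pi * m := by positivity
    apply Continuous.mul
    · apply Continuous.mul
      · apply hG_cont.comp_continuous (by fun_prop)
        intro x; simp [hy0]
      · fun_prop
    · apply Continuous.inv₀
      · fun_prop
      · intro x
        rw [hq_line m x]
        exact_mod_cast ne_of_gt (hq_line_pos x)
  have hint : ∀ m : ℕ, Integrable (fun x : ℝ => FFd G T k ((x : ℂ) + 2 * Real.pi * m * I)) := by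
    intro m
    apply Integrable.mono' (hφ_int.mul_const (Real.exp (2 * Real.pi * m * (c₁ - T))))
      (hline_cont m).aestronglyMeasurable
    filter_upwards with x
    exact habs_line m x
  set Iline : ℕ → ℂ := fun m => ∫ x : ℝ, FFd G T k ((x : ℂ) + 2 * Real.pi * m * I) with hIline_def
  have hIbound : ∀ m : ℕ, ‖Iline m‖ ≤ (∫ x : ℝ, φ x) * Real.exp (2 * Real.pi * m * (c₁ - T)) := by
    intro m
    calc ‖Iline m‖ ≤ ∫ x : ℝ, ‖FFd G T k ((x : ℂ) + 2 * Real.pi * m * I)‖ :=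
          norm_integral_le_integral_norm _
      _ ≤ ∫ x : ℝ, φ x * Real.exp (2 * Real.pi * m * (c₁ - T)) := by
          apply integral_mono (hint m).norm (hφ_int.mul_const _)
          intro x
          exact habs_line m x
      _ = (∫ x : ℝ, φ x) * Real.exp (2 * Real.pi * m * (c₁ - T)) := by
          rw [integral_mul_const]
  -- vertical estimates
  have habs_exp_line : ∀ (u y : ℝ),
      ‖Complex.exp ((k : ℂ) - ((u : ℂ) + y * I))‖ = Real.exp (k - u) := by
    intro u y
    rw [Complex.norm_exp]
    congr 1
    simp
  have hexp_one : (2:ℝ) ≤ Real.exp 1 := by nlinarith [Real.add_one_le_exp 1]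
  have hq_right : ∀ (u y : ℝ), k + 1 ≤ u →
      (1/2 : ℝ) ≤ ‖1 + Complex.exp ((k : ℂ) - ((u : ℂ) + y * I))‖ := by
    intro u y hu
    set w : ℂ := Complex.exp ((k : ℂ) - ((u : ℂ) + y * I)) with hw
    have habsw : ‖w‖ ≤ 1/2 := by
      rw [hw, habs_exp_line]
      have h1 : Real.exp (k - u) ≤ Real.exp (-1) := Real.exp_le_exp.mpr (by linarith)
      have h2 : Real.exp (-1) ≤ 1/2 := by
        rw [Real.exp_neg]
        have h3 := Real.exp_pos 1
        rw [inv_le_comm₀ h3 (by norm_num)]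
        linarith
      linarith
    have htri : (1:ℝ) ≤ ‖1 + w‖ + ‖w‖ := by
      have h := norm_add_le (1 + w) (-w)
      simpa using h
    linarith
  have hq_left : ∀ (u y : ℝ), u ≤ k - 1 →
      (1/2 : ℝ) ≤ ‖1 + Complex.exp ((k : ℂ) - ((u : ℂ) + y * I))‖ := by
    intro u y hu
    set w : ℂ := Complex.exp ((k : ℂ) - ((u : ℂ) + y * I)) with hw
    have habsw : (2:ℝ) ≤ ‖w‖ := by
      rw [hw, habs_exp_line]
      have h1 : Real.exp 1 ≤ Real.exp (k - u) := Real.exp_le_exp.mpr (by linarith)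
      linarith
    have htri : ‖w‖ ≤ ‖1 + w‖ + 1 := by
      have h := norm_add_le (1 + w) (-1)
      have h2 : ‖(1 + w) + (-1)‖ = ‖w‖ := by congr 1; ring
      rw [h2] at h
      simpa using h
    linarith
  have habs_vert : ∀ (u y : ℝ), 0 ≤ y →
      (1/2 : ℝ) ≤ ‖1 + Complex.exp ((k : ℂ) - ((u : ℂ) + y * I))‖ →
      ‖FFd G T k ((u : ℂ) + y * I)‖ ≤ 2 * φ u * Real.exp (c₁ * y) := by
    intro u y hy hq
    have him : ((u : ℂ) + y * I).im = y := by simp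
    have hre : ((u : ℂ) + y * I).re = u := by simp
    rw [FFd, norm_mul, norm_mul, habs_exp, him, norm_inv]
    have h1 : ‖G ((u : ℂ) + y * I)‖ ≤ φ u * Real.exp (c₁ * y) := by
      have := hG_bound ((u : ℂ) + y * I) (by rw [him]; exact hy)
      rwa [him, hre] at this
    have h2 : Real.exp (-(T * y)) ≤ 1 :=
      Real.exp_le_one_iff.mpr (by nlinarith)
    have h3 : (‖1 + Complex.exp ((k : ℂ) - ((u : ℂ) + y * I))‖)⁻¹ ≤ 2 := by
      rw [show (2:ℝ) = (1/2 : ℝ)⁻¹ by norm_num]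
      exact inv_anti₀ (by norm_num) hq
    have h4 : (0:ℝ) ≤ ‖G ((u : ℂ) + y * I)‖ := norm_nonneg _
    have h5 : (0:ℝ) ≤ φ u * Real.exp (c₁ * y) := mul_nonneg (hφ_nonneg u) (Real.exp_pos _).le
    have h6 : (0:ℝ) ≤ Real.exp (-(T * y)) := (Real.exp_pos _).le
    have h7 : (0:ℝ) ≤ (‖1 + Complex.exp ((k : ℂ) - ((u : ℂ) + y * I))‖)⁻¹ := by
      positivity
    calc ‖G ((u : ℂ) + y * I)‖ * Real.exp (-(T * y)) *
          (‖1 + Complex.exp ((k : ℂ) - ((u : ℂ) + y * I))‖)⁻¹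
        ≤ (φ u * Real.exp (c₁ * y)) * 1 * 2 := by
          apply mul_le_mul _ h3 h7 (by positivity)
          apply mul_le_mul h1 h2 h6 h5
      _ = 2 * φ u * Real.exp (c₁ * y) := by ring
  -- φ decay along both ends
  have hφ_atTop : Tendsto φ atTop (𝓝 0) :=
    hφ_decay.mono_left (by rw [cocompact_eq_atBot_atTop]; exact le_sup_right)
  have hφ_atBot : Tendsto φ atBot (𝓝 0) :=
    hφ_decay.mono_left (by rw [cocompact_eq_atBot_atTop]; exact le_sup_left)
  have hφ_neg : Tendsto (fun R : ℝ => φ (-R)) atTop (𝓝 0) :=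
    hφ_atBot.comp tendsto_neg_atTop_atBot
  -- the contour-shifting step
  have hcast : ∀ m : ℕ, (fun x : ℝ => FFd G T k ((x : ℂ) + 2 * Real.pi * ((m : ℂ) + 1) * I)) =
      (fun x : ℝ => FFd G T k ((x : ℂ) + 2 * Real.pi * ((m + 1 : ℕ) : ℂ) * I)) := by
    intro m; funext x; push_cast; ring_nf
  have hstep : ∀ m : ℕ, Iline m =
      2 * Real.pi * I * (G (zm k m) * Complex.exp (I * (zm k m) * T)) + Iline (m + 1) := by
    intro m
    set c : ℝ := 2 * Real.pi * (m : ℝ) with hc_def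
    set e : ℝ := 2 * Real.pi * ((m : ℝ) + 1) with he_def
    have hc0 : 0 ≤ c := by positivity
    have hce : c ≤ e := by nlinarith
    have hBot : Tendsto (fun R : ℝ => ∫ x : ℝ in (-R)..R,
        FFd G T k ((x : ℂ) + 2 * Real.pi * (m : ℂ) * I)) atTop (𝓝 (Iline m)) :=
      intervalIntegral_tendsto_integral (hint m) tendsto_neg_atTop_atBot tendsto_id
    have hTop : Tendsto (fun R : ℝ => ∫ x : ℝ in (-R)..R,
        FFd G T k ((x : ℂ) + 2 * Real.pi * ((m : ℂ) + 1) * I)) atTop (𝓝 (Iline (m + 1))) := by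
      rw [hcast m]
      exact intervalIntegral_tendsto_integral (hint (m + 1)) tendsto_neg_atTop_atBot tendsto_id
    have hvert_tendsto : ∀ (s : ℝ → ℝ), Tendsto (fun R => φ (s R)) atTop (𝓝 0) →
        (∀ᶠ R in atTop, ∀ y ∈ Set.uIoc c e,
          ‖FFd G T k ((s R : ℂ) + y * I)‖ ≤ 2 * φ (s R) * Real.exp (c₁ * e)) →
        Tendsto (fun R : ℝ => ∫ y : ℝ in c..e, FFd G T k ((s R : ℂ) + y * I)) atTop (𝓝 0) := by
      intro s hs hev
      apply squeeze_zero_norm' (a := fun R => 2 * φ (s R) * Real.exp (c₁ * e) * |e - c|)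
      · filter_upwards [hev] with R hR
        exact intervalIntegral.norm_integral_le_of_norm_le_const hR
      · have := ((hs.const_mul 2).mul_const (Real.exp (c₁ * e))).mul_const |e - c|
        simpa using this
    have hmem_y : ∀ y : ℝ, y ∈ Set.uIoc c e → 0 ≤ y ∧ y ≤ e := by
      intro y hy
      rw [Set.uIoc_of_le hce] at hy
      exact ⟨le_trans hc0 hy.1.le, hy.2⟩
    have hvb : ∀ (u y : ℝ), 0 ≤ y → y ≤ e →
        (1/2 : ℝ) ≤ ‖1 + Complex.exp ((k : ℂ) - ((u : ℂ) + y * I))‖ →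
        ‖FFd G T k ((u : ℂ) + y * I)‖ ≤ 2 * φ u * Real.exp (c₁ * e) := by
      intro u y hy0 hye hq
      have h1 := habs_vert u y hy0 hq
      calc ‖FFd G T k ((u : ℂ) + y * I)‖ ≤ 2 * φ u * Real.exp (c₁ * y) := h1
        _ ≤ 2 * φ u * Real.exp (c₁ * e) := by
            apply mul_le_mul_of_nonneg_left (Real.exp_le_exp.mpr (by nlinarith))
            have := hφ_nonneg u; linarith
    have hVr : Tendsto (fun R : ℝ => ∫ y : ℝ in c..e, FFd G T k ((R : ℂ) + y * I))
        atTop (𝓝 0) := by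
      apply hvert_tendsto id hφ_atTop
      filter_upwards [eventually_ge_atTop (|k| + 1)] with R hR y hy
      obtain ⟨hy0, hye⟩ := hmem_y y hy
      exact hvb R y hy0 hye (hq_right R y (by have := le_abs_self k; linarith))
    have hVl : Tendsto (fun R : ℝ => ∫ y : ℝ in c..e, FFd G T k (((-R : ℝ) : ℂ) + y * I))
        atTop (𝓝 0) := by
      apply hvert_tendsto (fun R => -R) hφ_neg
      filter_upwards [eventually_ge_atTop (|k| + 1)] with R hR y hy
      obtain ⟨hy0, hye⟩ := hmem_y y hy
      exact hvb (-R) y hy0 hye (hq_left (-R) y (by have := neg_abs_le k; linarith))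
    have hcomb : Tendsto (fun R : ℝ =>
        (∫ x : ℝ in (-R)..R, FFd G T k ((x : ℂ) + 2 * Real.pi * (m : ℂ) * I)) -
        (∫ x : ℝ in (-R)..R, FFd G T k ((x : ℂ) + 2 * Real.pi * ((m : ℂ) + 1) * I)) +
        I • (∫ y : ℝ in c..e, FFd G T k ((R : ℂ) + y * I)) -
        I • (∫ y : ℝ in c..e, FFd G T k (((-R : ℝ) : ℂ) + y * I))) atTop
        (𝓝 (Iline m - Iline (m + 1) + I • (0:ℂ) - I • (0:ℂ))) :=
      ((hBot.sub hTop).add (hVr.const_smul I)).sub (hVl.const_smul I)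
    have hev : (fun R : ℝ =>
        (∫ x : ℝ in (-R)..R, FFd G T k ((x : ℂ) + 2 * Real.pi * (m : ℂ) * I)) -
        (∫ x : ℝ in (-R)..R, FFd G T k ((x : ℂ) + 2 * Real.pi * ((m : ℂ) + 1) * I)) +
        I • (∫ y : ℝ in c..e, FFd G T k ((R : ℂ) + y * I)) -
        I • (∫ y : ℝ in c..e, FFd G T k (((-R : ℝ) : ℂ) + y * I))) =ᶠ[atTop]
        (fun _ => 2 * Real.pi * I * (G (zm k m) * Complex.exp (I * (zm k m) * T))) := by
      filter_upwards [eventually_ge_atTop (|k| + 1)] with R hR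
      exact rect_residue' T k G hG_cont hG_diff m R hR
    have hfinal := tendsto_nhds_unique (hcomb.congr' hev) tendsto_const_nhds
    rw [smul_zero] at hfinal
    linear_combination hfinal
  -- telescoping
  have htel : ∀ m : ℕ, Iline 0 =
      (∑ n ∈ Finset.range m, 2 * Real.pi * I * (G (zm k n) * Complex.exp (I * (zm k n) * T))) +
        Iline m := by
    intro m
    induction m with
    | zero => simp
    | succ m ih =>
      rw [ih, hstep m, Finset.sum_range_succ]
      ring
  -- Iline tends to 0
  have hIto0 : Tendsto Iline atTop (𝓝 0) := by
    apply squeeze_zero_norm hIbound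
    have h1 : ∀ m : ℕ, (∫ x : ℝ, φ x) * Real.exp (2 * Real.pi * (m : ℝ) * (c₁ - T)) =
        (∫ x : ℝ, φ x) * (Real.exp (2 * Real.pi * (c₁ - T)))^m := by
      intro m
      rw [← Real.exp_nat_mul]
      congr 1
      ring
    simp only [h1]
    have h2 : Tendsto (fun m : ℕ => (Real.exp (2 * Real.pi * (c₁ - T)))^m) atTop (𝓝 0) := by
      apply tendsto_pow_atTop_nhds_zero_of_lt_one (Real.exp_pos _).le
      rw [Real.exp_lt_one_iff]
      nlinarith
    simpa using h2.const_mul (∫ x : ℝ, φ x)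
  -- summability
  set gn : ℕ → ℂ := fun n => G ((k : ℂ) + 2 * Real.pi * Complex.I * ((n : ℂ) + 1 / 2)) *
      Complex.exp (-(2 * Real.pi * ((n : ℂ) + 1 / 2) * (T : ℂ))) with hgn_def
  have hzm_eq : ∀ n : ℕ, ((k : ℂ) + 2 * Real.pi * Complex.I * ((n : ℂ) + 1 / 2)) = zm k n := by
    intro n; rw [zm]; push_cast; ring
  have hexp_real : ∀ n : ℕ, (-(2 * (Real.pi:ℂ) * ((n : ℂ) + 1 / 2) * (T : ℂ))) =
      ((-(2 * Real.pi * ((n : ℝ) + 1 / 2) * T) : ℝ) : ℂ) := by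
    intro n; push_cast; ring
  have habs_gn : ∀ n : ℕ, ‖gn n‖ ≤
      (φ k * Real.exp (Real.pi * (c₁ - T))) * (Real.exp (2 * Real.pi * (c₁ - T)))^n := by
    intro n
    rw [hgn_def]
    simp only
    rw [norm_mul, hzm_eq n, hexp_real n, Complex.norm_exp_ofReal]
    have hG : ‖G (zm k n)‖ ≤ φ k * Real.exp (c₁ * ((2 * n + 1) * Real.pi)) := by
      have h0 : 0 ≤ (zm k n).im := by rw [zm_im]; positivity
      have := hG_bound (zm k n) h0
      rwa [zm_re, zm_im] at this
    calc ‖G (zm k n)‖ * Real.exp (-(2 * Real.pi * ((n : ℝ) + 1 / 2) * T))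
        ≤ (φ k * Real.exp (c₁ * ((2 * n + 1) * Real.pi))) *
            Real.exp (-(2 * Real.pi * ((n : ℝ) + 1 / 2) * T)) :=
          mul_le_mul_of_nonneg_right hG (Real.exp_pos _).le
      _ = (φ k * Real.exp (Real.pi * (c₁ - T))) * (Real.exp (2 * Real.pi * (c₁ - T)))^n := by
          have hmerge : Real.exp (c₁ * ((2 * (n:ℝ) + 1) * Real.pi)) *
              Real.exp (-(2 * Real.pi * ((n : ℝ) + 1 / 2) * T)) =
              Real.exp (Real.pi * (c₁ - T)) * (Real.exp (2 * Real.pi * (c₁ - T)))^n := by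
            rw [← Real.exp_nat_mul, ← Real.exp_add, ← Real.exp_add]
            congr 1
            ring
          rw [mul_assoc, hmerge, ← mul_assoc]
  have hgeom : Summable (fun n : ℕ => (φ k * Real.exp (Real.pi * (c₁ - T))) *
      (Real.exp (2 * Real.pi * (c₁ - T)))^n) := by
    apply Summable.mul_left
    apply summable_geometric_of_lt_one (Real.exp_pos _).le
    rw [Real.exp_lt_one_iff]
    nlinarith
  have hsum_abs : Summable (fun n : ℕ => ‖gn n‖) :=
    Summable.of_nonneg_of_le (fun n => norm_nonneg _) habs_gn hgeom
  have hsum_gn : Summable gn := by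
    apply Summable.of_norm
    exact hsum_abs
  -- relating residues to gn
  have hres_gn : ∀ n : ℕ, 2 * (Real.pi : ℂ) * I * (G (zm k n) * Complex.exp (I * (zm k n) * T)) =
      2 * Real.pi * I * Complex.exp (I * (k : ℂ) * (T : ℂ)) * gn n := by
    intro n
    have harg : I * (zm k n) * (T : ℂ) =
        I * (k : ℂ) * (T : ℂ) + (-(2 * (Real.pi : ℂ) * ((n : ℂ) + 1 / 2) * (T : ℂ))) := by
      rw [zm]
      linear_combination ((2 * (n : ℂ) + 1) * (Real.pi : ℂ) * (T : ℂ)) * Complex.I_sq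
    rw [hgn_def]
    simp only
    rw [hzm_eq n, harg, Complex.exp_add]
    ring
  have htel' : ∀ m : ℕ, Iline 0 =
      2 * Real.pi * I * Complex.exp (I * (k : ℂ) * (T : ℂ)) * (∑ n ∈ Finset.range m, gn n) +
        Iline m := by
    intro m
    rw [htel m]
    congr 1
    rw [Finset.mul_sum]
    exact Finset.sum_congr rfl (fun n _ => hres_gn n)
  have hlim1 : Tendsto (fun m : ℕ =>
      2 * Real.pi * I * Complex.exp (I * (k : ℂ) * (T : ℂ)) * (∑ n ∈ Finset.range m, gn n) +
        Iline m) atTop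
      (𝓝 (2 * Real.pi * I * Complex.exp (I * (k : ℂ) * (T : ℂ)) * (∑' n, gn n) + 0)) :=
    (hsum_gn.hasSum.tendsto_sum_nat.const_mul _).add hIto0
  have heqfun : (fun m : ℕ =>
      2 * Real.pi * I * Complex.exp (I * (k : ℂ) * (T : ℂ)) * (∑ n ∈ Finset.range m, gn n) +
        Iline m) = fun _ => Iline 0 := funext fun m => (htel' m).symm
  rw [heqfun] at hlim1
  have hI0 : Iline 0 = 2 * Real.pi * I * Complex.exp (I * (k : ℂ) * (T : ℂ)) * (∑' n, gn n) := by
    have := tendsto_nhds_unique tendsto_const_nhds hlim1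
    simpa using this
  have hfun0 : (fun x : ℝ => FFd G T k ((x : ℂ) + 2 * Real.pi * ((0 : ℕ) : ℂ) * I)) =
      (fun p : ℝ => G (p : ℂ) * Complex.exp (Complex.I * (p : ℂ) * (T : ℂ)) *
        (1 + Complex.exp ((k : ℂ) - (p : ℂ)))⁻¹) := by
    funext x
    simp [FFd]
  refine ⟨?_, ?_, ?_⟩
  · rw [← hfun0]
    exact hint 0
  · exact hsum_abs
  · have : (∫ p : ℝ, G (p : ℂ) * Complex.exp (Complex.I * (p : ℂ) * (T : ℂ)) *
        (1 + Complex.exp ((k : ℂ) - (p : ℂ)))⁻¹) = Iline 0 := by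
      rw [hIline_def]
      simp only
      rw [← hfun0]
    rw [this, hI0]
end
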